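/- arXiv:1602.02769 — 6 statements merged into one kernel-verified Lean document; each statement's English description precedes it below -/
import Mathlib

section
/- Let k ≥ 1 and let A be a k-element multiset of complex numbers. Then for every 1 ≤ i ≤ k one has e_i(X) − e_i(A) ∈ I_A, where e_i(X) is the i-th elementary symmetric polynomial in x_1,…,x_k, e_i(A) ∈ ℂ is the i-th elementary symmetric function of the multiset A, and I_A is the ideal of Sym(X) generated by {h_j(X−A) : j ≥ 1}. -/
open MvPolynomial

set_option synthInstance.maxHeartbeats 400000
set_option maxHeartbeats 1000000

noncomputable section

/-- The algebra `Sym(X)` of symmetric polynomials in the alphabet `X = {x_1, …, x_k}`. -/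
abbrev SymP (k : ℕ) : Subalgebra ℂ (MvPolynomial (Fin k) ℂ) :=
  MvPolynomial.symmetricSubalgebra (Fin k) ℂ

/-- The complete homogeneous symmetric polynomial `h_a(X)` as an element of `Sym(X)`. -/
def hX (k a : ℕ) : SymP k :=
  ⟨MvPolynomial.hsymm (Fin k) ℂ a,
    (mem_symmetricSubalgebra _).mpr (MvPolynomial.hsymm_isSymmetric _ _ a)⟩

/-- The elementary symmetric polynomial `e_i(X)` as an element of `Sym(X)`. -/
def eX (k i : ℕ) : SymP k :=
  ⟨MvPolynomial.esymm (Fin k) ℂ i,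
    (mem_symmetricSubalgebra _).mpr (MvPolynomial.esymm_isSymmetric _ _ i)⟩

/-- `h_i(X − S) := Σ_{a+b=i} (−1)^b e_b(S) h_a(X)`, an element of `Sym(X)`. -/
def hXS (k : ℕ) (S : Multiset ℂ) (i : ℕ) : SymP k :=
  ∑ p ∈ Finset.HasAntidiagonal.antidiagonal i, ((-1 : ℂ) ^ p.2 * S.esymm p.2) • hX k p.1

/-- The ideal `I_Σ` of `Sym(X)` generated by `h_{N−k+i}(X−Σ)` for `i > 0`. -/
def defIdeal (k N : ℕ) (S : Multiset ℂ) : Ideal (SymP k) :=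
  Ideal.span {f | ∃ i : ℕ, 0 < i ∧ f = hXS k S (N - k + i)}

/-- `π_A = Π_{λ ∈ Σ∖A} Π_{j=1}^k (λ − x_j)` as a polynomial. -/
def piPoly (k : ℕ) (S A : Multiset ℂ) : MvPolynomial (Fin k) ℂ :=
  ((S - A).map fun lam => ∏ j : Fin k, (C lam - X j)).prod

lemma piPoly_isSymmetric (k : ℕ) (S A : Multiset ℂ) : (piPoly k S A).IsSymmetric := by
  intro e
  unfold piPoly
  rw [map_multiset_prod, Multiset.map_map]
  congr 1
  refine Multiset.map_congr rfl ?_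
  intro lam _
  simp only [Function.comp_apply, map_prod, map_sub, rename_C, rename_X]
  exact Equiv.prod_comp e fun j => C lam - X j

/-- `π_A` as an element of `Sym(X)`. -/
def piS (k : ℕ) (S A : Multiset ℂ) : SymP k :=
  ⟨piPoly k S A, (mem_symmetricSubalgebra _).mpr (piPoly_isSymmetric k S A)⟩

lemma hXS_coe (k : ℕ) (A : Multiset ℂ) (a : ℕ) :
    ((hXS k A a : SymP k) : MvPolynomial (Fin k) ℂ)
    = ∑ p ∈ Finset.HasAntidiagonal.antidiagonal a, C ((-1 : ℂ) ^ p.2 * A.esymm p.2) * hsymm (Fin k) ℂ p.1 := by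
  simp [hXS, hX, smul_eq_C_mul]

lemma hXS_zero (k : ℕ) (A : Multiset ℂ) : hXS k A 0 = 1 := by
  apply Subtype.ext
  rw [hXS_coe]
  simp [Multiset.esymm]

lemma esymm_zero' (A : Multiset ℂ) : A.esymm 0 = 1 := by simp [Multiset.esymm]

lemma geom {R : Type*} [CommRing R] (x : R) :
    (1 - PowerSeries.C x * PowerSeries.X) * PowerSeries.mk (fun n => x ^ n) = 1 := by
  ext n
  cases n with
  | zero => simp
  | succ n =>
    rw [sub_mul, one_mul, map_sub, mul_assoc,
      mul_comm (PowerSeries.X) (PowerSeries.mk fun n => x ^ n), ← mul_assoc,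
      PowerSeries.coeff_succ_mul_X, PowerSeries.coeff_C_mul]
    simp [pow_succ, mul_comm]

lemma sum_univ_toFinsupp {k : ℕ} (l : Fin k →₀ ℕ) :
    (Finsupp.toMultiset l).card = Finset.univ.sum ⇑l := by
  rw [Finsupp.card_toMultiset, Finsupp.sum_fintype]
  · rfl
  · simp

lemma coeffH (k n : ℕ) :
    PowerSeries.coeff n
      (∏ j : Fin k, PowerSeries.mk fun m => (X j : MvPolynomial (Fin k) ℂ) ^ m)
    = hsymm (Fin k) ℂ n := by
  rw [PowerSeries.coeff_prod]
  simp only [PowerSeries.coeff_mk]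
  rw [hsymm]
  refine Finset.sum_bij'
    (i := fun l hl => (⟨Finsupp.toMultiset l, by
      rw [sum_univ_toFinsupp]; exact (Finset.mem_finsuppAntidiag.mp hl).1⟩ : Sym (Fin k) n))
    (j := fun s _ => Multiset.toFinsupp s.1)
    (fun _ _ => Finset.mem_univ _)
    (fun s _ => by
      rw [Finset.mem_finsuppAntidiag]
      refine ⟨?_, Finset.subset_univ _⟩
      have := sum_univ_toFinsupp (Multiset.toFinsupp s.1)
      rw [Multiset.toFinsupp_toMultiset] at this
      rw [← this, s.2])
    (fun l _ => Finsupp.toMultiset_toFinsupp _)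
    (fun s _ => Sym.ext (by simp))
    (fun l hl => ?_)
  show ∏ j : Fin k, (X j : MvPolynomial (Fin k) ℂ) ^ l j
      = (Multiset.map X (Finsupp.toMultiset l)).prod
  rw [Finset.prod_multiset_map_count (Finsupp.toMultiset l) X]
  simp only [Finsupp.count_toMultiset]
  refine (Finset.prod_subset (Finset.subset_univ _) ?_).symm
  intro j _ hj
  simp only [Multiset.mem_toFinset, Finsupp.mem_toMultiset, Finsupp.mem_support_iff,
    not_not] at hj
  simp [hj]

lemma coeffE (k b : ℕ) :
    PowerSeries.coeff b
      (∏ j : Fin k, (1 - PowerSeries.C (X j) * PowerSeries.X))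
    = (-1 : MvPolynomial (Fin k) ℂ) ^ b * esymm (Fin k) ℂ b := by
  have hfac : ∀ j : Fin k, (1 - PowerSeries.C (R := MvPolynomial (Fin k) ℂ) (X j) * PowerSeries.X)
      = (-(PowerSeries.C (R := MvPolynomial (Fin k) ℂ) (X j) * PowerSeries.X)) + 1 := by
    intro j; ring
  simp_rw [hfac]
  rw [Finset.prod_add]
  have hT : ∀ T : Finset (Fin k),
      (∏ j ∈ T, -(PowerSeries.C (R := MvPolynomial (Fin k) ℂ) (X j) * PowerSeries.X))
      = PowerSeries.C (R := MvPolynomial (Fin k) ℂ) ((-1) ^ T.card * ∏ j ∈ T, X j)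
          * PowerSeries.X ^ T.card := by
    intro T
    have h1 : ∀ j ∈ T, -(PowerSeries.C (R := MvPolynomial (Fin k) ℂ) (X j) * PowerSeries.X)
        = PowerSeries.C (R := MvPolynomial (Fin k) ℂ) (-1 * X j) * PowerSeries.X := by
      intro j _
      simp
    rw [Finset.prod_congr rfl h1, Finset.prod_mul_distrib, Finset.prod_const, ← map_prod,
      Finset.prod_mul_distrib, Finset.prod_const]
  simp_rw [hT, Finset.prod_const_one, mul_one, map_sum, PowerSeries.coeff_C_mul,
    PowerSeries.coeff_X_pow, mul_ite, mul_one, mul_zero]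
  simp_rw [eq_comm (a := b)]
  rw [← Finset.sum_filter, ← Finset.powersetCard_eq_filter, esymm, Finset.mul_sum]
  refine Finset.sum_congr rfl fun T hT' => ?_
  rw [(Finset.mem_powersetCard.mp hT').2]

lemma C2 (k : ℕ) (A : Multiset ℂ) (n : ℕ) :
    ∑ p ∈ Finset.HasAntidiagonal.antidiagonal n,
        (-1 : MvPolynomial (Fin k) ℂ) ^ p.1 * esymm (Fin k) ℂ p.1
          * ((hXS k A p.2 : SymP k) : MvPolynomial (Fin k) ℂ)
    = C ((-1 : ℂ) ^ n * A.esymm n) := by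
  set E : PowerSeries (MvPolynomial (Fin k) ℂ) :=
    ∏ j : Fin k, (1 - PowerSeries.C (X j) * PowerSeries.X) with hE
  set H : PowerSeries (MvPolynomial (Fin k) ℂ) :=
    ∏ j : Fin k, PowerSeries.mk fun m => (X j : MvPolynomial (Fin k) ℂ) ^ m with hH
  set EA : PowerSeries (MvPolynomial (Fin k) ℂ) :=
    PowerSeries.mk fun b => C ((-1 : ℂ) ^ b * A.esymm b) with hEA
  set G : PowerSeries (MvPolynomial (Fin k) ℂ) :=
    PowerSeries.mk fun a => ((hXS k A a : SymP k) : MvPolynomial (Fin k) ℂ) with hG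
  have hEH : E * H = 1 := by
    rw [hE, hH, ← Finset.prod_mul_distrib]
    exact Finset.prod_eq_one fun j _ => geom (X j)
  have hGEH : G = EA * H := by
    ext a : 1
    rw [hG, PowerSeries.coeff_mk, PowerSeries.coeff_mul, hXS_coe]
    refine Eq.trans ?_ (Finset.Nat.sum_antidiagonal_swap
      (f := fun p => PowerSeries.coeff p.1 EA * PowerSeries.coeff p.2 H))
    refine Finset.sum_congr rfl fun p _ => ?_
    simp only [Prod.fst_swap, Prod.snd_swap]
    rw [hEA, PowerSeries.coeff_mk, hH, coeffH]
  have hEG : E * G = EA := by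
    rw [hGEH, ← mul_assoc, mul_comm E EA, mul_assoc, hEH, mul_one]
  have := congrArg (PowerSeries.coeff n) hEG
  rw [PowerSeries.coeff_mul, hEA, PowerSeries.coeff_mk] at this
  rw [← this]
  refine Finset.sum_congr rfl fun p _ => ?_
  rw [coeffE, hG, PowerSeries.coeff_mk]


/-- For a `k`-element multiset `A` of complex numbers and every `1 ≤ i ≤ k`,
one has `e_i(X) − e_i(A) ∈ I_A`, where `I_A` is the ideal of `Sym(X)` generated by the
`h_j(X−A)`, `j ≥ 1`. -/
theorem statement5 (k : ℕ) (hk : 1 ≤ k) (A : Multiset ℂ) (hAcard : Multiset.card A = k)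
    (i : ℕ) (hi1 : 1 ≤ i) (hik : i ≤ k) :
    eX k i - algebraMap ℂ (SymP k) (A.esymm i) ∈
      Ideal.span {f | ∃ j : ℕ, 1 ≤ j ∧ f = hXS k A j} := by
  have hC2 : (∑ p ∈ Finset.HasAntidiagonal.antidiagonal i, ((-1 : ℂ) ^ p.1) • (eX k p.1 * hXS k A p.2))
      = algebraMap ℂ (SymP k) ((-1) ^ i * A.esymm i) := by
    apply Subtype.ext
    have hco : ((algebraMap ℂ (SymP k) ((-1) ^ i * A.esymm i) : SymP k) : MvPolynomial (Fin k) ℂ)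
        = C ((-1 : ℂ) ^ i * A.esymm i) := rfl
    rw [hco]
    rw [← C2 k A i]
    push_cast [AddSubmonoidClass.coe_finset_sum, SetLike.val_smul, MulMemClass.coe_mul]
    refine Finset.sum_congr rfl fun p _ => ?_
    rw [smul_eq_C_mul]
    have : ((eX k p.1 : SymP k) : MvPolynomial (Fin k) ℂ) = esymm (Fin k) ℂ p.1 := rfl
    rw [this, map_pow, map_neg, map_one, mul_assoc]
  have hmem : (i, 0) ∈ Finset.HasAntidiagonal.antidiagonal i := by simp
  have hsplit : ((-1 : ℂ) ^ i) • (eX k i * hXS k A 0)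
      + ∑ p ∈ (Finset.HasAntidiagonal.antidiagonal i).erase (i, 0),
          ((-1 : ℂ) ^ p.1) • (eX k p.1 * hXS k A p.2)
      = algebraMap ℂ (SymP k) ((-1) ^ i * A.esymm i) := by
    rw [Finset.add_sum_erase _ (fun p => ((-1 : ℂ) ^ p.1) • (eX k p.1 * hXS k A p.2)) hmem]
    exact hC2
  rw [hXS_zero, mul_one] at hsplit
  set S' := ∑ p ∈ (Finset.HasAntidiagonal.antidiagonal i).erase (i, 0),
      ((-1 : ℂ) ^ p.1) • (eX k p.1 * hXS k A p.2) with hS'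
  have hone : ((-1 : ℂ) ^ i * (-1) ^ i) = 1 := by
    rw [← pow_add, ← two_mul, pow_mul]
    simp
  have heq : eX k i - algebraMap ℂ (SymP k) (A.esymm i) = -(((-1 : ℂ) ^ i) • S') := by
    have h2 := congrArg (fun x => ((-1 : ℂ) ^ i) • x) hsplit
    simp only [smul_add, smul_smul, hone, one_smul] at h2
    have h3 : ((-1 : ℂ) ^ i) • algebraMap ℂ (SymP k) ((-1) ^ i * A.esymm i)
        = algebraMap ℂ (SymP k) (A.esymm i) := by
      rw [Algebra.smul_def, ← map_mul, ← mul_assoc, hone, one_mul]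
    rw [h3] at h2
    rw [← h2]
    abel
  rw [heq]
  refine neg_mem ?_
  rw [Algebra.smul_def]
  refine Ideal.mul_mem_left _ _ ?_
  refine Ideal.sum_mem _ fun p hp => ?_
  rw [Algebra.smul_def]
  refine Ideal.mul_mem_left _ _ (Ideal.mul_mem_left _ _ ?_)
  rcases Finset.mem_erase.mp hp with ⟨hne, hpm⟩
  have hsum := Finset.HasAntidiagonal.mem_antidiagonal.mp hpm
  have hp2 : p.2 ≠ 0 := by
    intro h0
    exact hne (Prod.ext (by omega) h0)
  exact Ideal.subset_span ⟨p.2, Nat.one_le_iff_ne_zero.mpr hp2, rfl⟩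
end
end

section
/- Let m ≥ 1, let o(1),…,o(m) ≥ 1 be integers, and fix an index i with k := o(i) ≤ o(l) for all l. Let P := ℂ[x_{l,j}, x'_{l,j} : 1 ≤ l ≤ m, 1 ≤ j ≤ o(l)] be a polynomial ring; with the conventions x_{l,0} = x'_{l,0} = 1 and x_{l,j} = x'_{l,j} = 0 for j > o(l), define for each j ≥ 1 the elements E_j := Σ_{j_1+⋯+j_m = j} Π_{l=1}^m x_{l,j_l} and E'_j := Σ_{j_1+⋯+j_m = j} Π_{l=1}^m x'_{l,j_l}. Let T := P/⟨E'_j − E_j : 1 ≤ j ≤ k⟩. Then the composite of the inclusion of the polynomial subring of P generated by all variables except x'_{i,1},…,x'_{i,k} with the quotient map P → T is an isomorphism of ℂ-algebras; in particular T is a polynomial ring. (Identifying x_{l,j} with the j-th elementary symmetric polynomial e_j(X_l) of an alphabet X_l of size o(l), and x'_{l,j} with e_j(X'_l), this is the statement that 𝒯 = Sym(X_1|…|X_m|X'_1|…|X'_m)/⟨e_j(⊔_l X'_l) − e_j(⊔_l X_l) : 1 ≤ j ≤ k⟩ is a polynomial ring, with the canonical map from the subring omitting e_1(X'_i),…,e_k(X'_i)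 being an isomorphism.) -/
open MvPolynomial

set_option synthInstance.maxHeartbeats 400000
set_option maxHeartbeats 1000000

noncomputable section

/-- The index type of the unprimed (resp. primed) variables: `⟨l, j⟩` stands for
`x_{l,j+1}` (resp. `x'_{l,j+1}`). -/
abbrev Idx7 (m : ℕ) (o : Fin m → ℕ) : Type := Σ l : Fin m, Fin (o l)

/-- The variables of `P`: `Sum.inl` are the `x_{l,j}`, `Sum.inr` are the `x'_{l,j}`. -/
abbrev V7 (m : ℕ) (o : Fin m → ℕ) : Type := Idx7 m o ⊕ Idx7 m o

/-- The generator `x_{l,j}` (for `primed = false`) resp. `x'_{l,j}` (for `primed = true`),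
with the conventions `x_{l,0} = x'_{l,0} = 1` and `x_{l,j} = x'_{l,j} = 0` for `j > o l`. -/
def xvar (m : ℕ) (o : Fin m → ℕ) (primed : Bool) (l : Fin m) (j : ℕ) :
    MvPolynomial (V7 m o) ℂ :=
  if hj : j = 0 then 1
  else if h : j ≤ o l then
    X ((if primed then Sum.inr else Sum.inl) ⟨l, ⟨j - 1, by omega⟩⟩)
  else 0

/-- `E_j := Σ_{j_1+⋯+j_m = j} Π_{l=1}^m x_{l,j_l}` (resp. `E'_j` for `primed = true`). -/
def Epoly (m : ℕ) (o : Fin m → ℕ) (primed : Bool) (j : ℕ) : MvPolynomial (V7 m o) ℂ :=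
  ∑ t ∈ Finset.Nat.antidiagonalTuple m j, ∏ l : Fin m, xvar m o primed l (t l)

/-- The ideal `⟨E'_j − E_j : 1 ≤ j ≤ k⟩`. -/
def J7 (m : ℕ) (o : Fin m → ℕ) (k : ℕ) : Ideal (MvPolynomial (V7 m o) ℂ) :=
  Ideal.span {f | ∃ j : ℕ, 1 ≤ j ∧ j ≤ k ∧ f = Epoly m o true j - Epoly m o false j}

/-- The set of all variables except `x'_{i,1}, …, x'_{i,o i}`. -/
def good7 (m : ℕ) (o : Fin m → ℕ) (i : Fin m) : Set (V7 m o) :=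
  {v | ∀ p : Idx7 m o, v = Sum.inr p → p.1 ≠ i}

-- auxiliary development

variable (m : ℕ) (o : Fin m → ℕ) (i : Fin m)

lemma good_inl (p : Idx7 m o) : (Sum.inl p : V7 m o) ∈ good7 m o i := by
  intro q hq; simp at hq

lemma good_inr {l : Fin m} (hl : l ≠ i) (j : Fin (o l)) :
    (Sum.inr ⟨l, j⟩ : V7 m o) ∈ good7 m o i := by
  intro q hq
  rw [Sum.inr.injEq] at hq
  subst hq
  exact hl

def gd (primed : Bool) (l : Fin m) (j : ℕ) : MvPolynomial (good7 m o i) ℂ :=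
  if hj : j = 0 then 1
  else if h : j ≤ o l ∧ (primed = true → l ≠ i) then
    X ⟨(if primed then Sum.inr else Sum.inl) ⟨l, ⟨j - 1, by omega⟩⟩, by
      cases primed with
      | false => exact good_inl m o i _
      | true => exact good_inr m o i (h.2 rfl) _⟩
  else 0

lemma rename_gd (primed : Bool) (l : Fin m) (j : ℕ) (hp : primed = true → l ≠ i) :
    rename Subtype.val (gd m o i primed l j) = xvar m o primed l j := by
  by_cases hj : j = 0
  · simp [gd, xvar, hj]
  · by_cases h : j ≤ o l
    · rw [gd, dif_neg hj, dif_pos ⟨h, hp⟩, xvar, dif_neg hj, dif_pos h, rename_X]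
    · simp [gd, xvar, hj, h]

lemma xvar_mem_supported (primed : Bool) (l : Fin m) (j : ℕ) (hp : primed = true → l ≠ i) :
    xvar m o primed l j ∈ supported ℂ (good7 m o i) := by
  rw [supported_eq_range_rename]
  exact ⟨gd m o i primed l j, rename_gd m o i primed l j hp⟩

lemma Epoly_false_mem_supported (n : ℕ) :
    Epoly m o false n ∈ supported ℂ (good7 m o i) := by
  apply Subalgebra.sum_mem
  intro t _
  apply Subalgebra.prod_mem
  intro l _
  exact xvar_mem_supported m o i false l (t l) (by simp)

def Eb (n : ℕ) : MvPolynomial (good7 m o i) ℂ :=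
  ∑ t ∈ Finset.Nat.antidiagonalTuple m n, ∏ l : Fin m, gd m o i false l (t l)

def sfun (m : ℕ) (o : Fin m → ℕ) (i : Fin m) : ℕ → MvPolynomial (good7 m o i) ℂ
  | j => Eb m o i (j + 1) -
      ∑ t ∈ (Finset.Nat.antidiagonalTuple m (j + 1)).erase (Pi.single i (j + 1)),
        ∏ l : Fin m,
          if h : l = i ∧ 1 ≤ t l ∧ t l - 1 < j then sfun m o i (t l - 1)
          else gd m o i true l (t l)
  decreasing_by exact h.2.2

def sig : V7 m o → MvPolynomial (good7 m o i) ℂ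
  | Sum.inl p => X ⟨Sum.inl p, good_inl m o i p⟩
  | Sum.inr ⟨l, j⟩ =>
      if h : l = i then sfun m o i j.val else X ⟨Sum.inr ⟨l, j⟩, good_inr m o i h j⟩

def phi : MvPolynomial (V7 m o) ℂ →ₐ[ℂ] MvPolynomial (good7 m o i) ℂ :=
  aeval (sig m o i)

lemma sig_good (v : V7 m o) (hv : v ∈ good7 m o i) : sig m o i v = X ⟨v, hv⟩ := by
  cases v with
  | inl p => rfl
  | inr p =>
    obtain ⟨l, j⟩ := p
    rw [sig, dif_neg (hv ⟨l, j⟩ rfl)]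

lemma phi_rename (q : MvPolynomial (good7 m o i) ℂ) :
    phi m o i (rename Subtype.val q) = q := by
  rw [phi, aeval_rename]
  have : (sig m o i) ∘ (Subtype.val : good7 m o i → V7 m o) = X :=
    funext fun v => sig_good m o i v.1 v.2
  rw [this, aeval_X_left_apply]

lemma phi_xvar_good (primed : Bool) (l : Fin m) (j : ℕ) (hp : primed = true → l ≠ i) :
    phi m o i (xvar m o primed l j) = gd m o i primed l j := by
  rw [← rename_gd m o i primed l j hp, phi_rename]

lemma phi_xvar_bad (n : ℕ) (h1 : 1 ≤ n) (h2 : n ≤ o i) :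
    phi m o i (xvar m o true i n) = sfun m o i (n - 1) := by
  rw [xvar, dif_neg (by omega), dif_pos h2]
  show phi m o i (X (Sum.inr ⟨i, ⟨n - 1, by omega⟩⟩)) = _
  rw [phi, aeval_X]
  rw [sig, dif_pos rfl]

lemma single_mem (n : ℕ) : Pi.single i n ∈ Finset.Nat.antidiagonalTuple m n := by
  rw [Finset.Nat.mem_antidiagonalTuple]
  simp

lemma le_of_mem_antidiag {n : ℕ} {t : Fin m → ℕ}
    (ht : t ∈ Finset.Nat.antidiagonalTuple m n) (l : Fin m) : t l ≤ n := by
  rw [Finset.Nat.mem_antidiagonalTuple] at ht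
  rw [← ht]
  exact Finset.single_le_sum (fun _ _ => Nat.zero_le _) (Finset.mem_univ l)

lemma bound_of_ne_single {j : ℕ} {t : Fin m → ℕ}
    (ht : t ∈ Finset.Nat.antidiagonalTuple m (j + 1))
    (hne : t ≠ Pi.single i (j + 1)) : t i ≤ j := by
  by_contra h
  have hti : t i = j + 1 := le_antisymm (le_of_mem_antidiag m ht i) (by omega)
  apply hne
  rw [Finset.Nat.mem_antidiagonalTuple] at ht
  have hsum : t i + ∑ l ∈ Finset.univ.erase i, t l = j + 1 := by
    rw [Finset.add_sum_erase _ t (Finset.mem_univ i)]; exact ht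
  have hzero : ∀ l ∈ Finset.univ.erase i, t l = 0 := by
    rw [← Finset.sum_eq_zero_iff]
    omega
  funext l
  by_cases hl : l = i
  · subst hl; rw [hti, Pi.single_eq_same]
  · rw [Pi.single_eq_of_ne hl]
    exact hzero l (Finset.mem_erase.mpr ⟨hl, Finset.mem_univ l⟩)

lemma phi_Epoly_false (n : ℕ) : phi m o i (Epoly m o false n) = Eb m o i n := by
  rw [Epoly, map_sum, Eb]
  refine Finset.sum_congr rfl fun t _ => ?_
  rw [map_prod]
  exact Finset.prod_congr rfl fun l _ => phi_xvar_good m o i false l (t l) (by simp)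

lemma phi_Epoly_true (j : ℕ) (hj : j + 1 ≤ o i) :
    phi m o i (Epoly m o true (j + 1)) = Eb m o i (j + 1) := by
  rw [Epoly, map_sum]
  rw [← Finset.add_sum_erase _ _ (single_mem m i (j + 1))]
  have h1 : phi m o i (∏ l : Fin m, xvar m o true l ((Pi.single i (j + 1) : Fin m → ℕ) l))
      = sfun m o i j := by
    rw [map_prod]
    rw [Fintype.prod_eq_single i (fun l hl => by
      rw [Pi.single_eq_of_ne hl]
      simp [xvar])]
    rw [Pi.single_eq_same, phi_xvar_bad m o i (j + 1) (by omega) hj]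
    norm_num
  have h2 : ∑ t ∈ (Finset.Nat.antidiagonalTuple m (j + 1)).erase (Pi.single i (j + 1)),
        phi m o i (∏ l : Fin m, xvar m o true l (t l))
      = ∑ t ∈ (Finset.Nat.antidiagonalTuple m (j + 1)).erase (Pi.single i (j + 1)),
        ∏ l : Fin m,
          if h : l = i ∧ 1 ≤ t l ∧ t l - 1 < j then sfun m o i (t l - 1)
          else gd m o i true l (t l) := by
    refine Finset.sum_congr rfl fun t ht => ?_
    rw [Finset.mem_erase] at ht
    have hti : t i ≤ j := bound_of_ne_single m i ht.2 ht.1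
    rw [map_prod]
    refine Finset.prod_congr rfl fun l _ => ?_
    by_cases hl : l = i
    · have htl : t l ≤ j := by rw [hl]; exact hti
      by_cases h1 : 1 ≤ t l
      · rw [dif_pos ⟨hl, h1, by omega⟩, hl]
        have h1' : 1 ≤ t i := by rw [← hl]; exact h1
        have h2' : t i ≤ o i := by omega
        rw [phi_xvar_bad m o i (t i) h1' h2']
      · have h0 : t l = 0 := by omega
        rw [dif_neg (by simp [h0]), h0]
        simp [xvar, gd]
    · rw [dif_neg (by tauto)]
      exact phi_xvar_good m o i true l (t l) fun _ => hl
  rw [h1, h2, sfun]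
  ring

lemma phi_J : ∀ a ∈ J7 m o (o i), phi m o i a = 0 := by
  intro a ha
  have h : J7 m o (o i) ≤ RingHom.ker (phi m o i).toRingHom := by
    rw [J7, Ideal.span_le]
    rintro f ⟨j, hj1, hj2, rfl⟩
    rw [SetLike.mem_coe, RingHom.mem_ker]
    show phi m o i _ = 0
    obtain ⟨j', rfl⟩ : ∃ j', j = j' + 1 := ⟨j - 1, by omega⟩
    rw [map_sub, phi_Epoly_true m o i j' hj2, phi_Epoly_false, sub_self]
  exact RingHom.mem_ker.mp (h ha)

def psi : (MvPolynomial (V7 m o) ℂ ⧸ J7 m o (o i)) →ₐ[ℂ] MvPolynomial (good7 m o i) ℂ :=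
  Ideal.Quotient.liftₐ (J7 m o (o i)) (phi m o i) (phi_J m o i)

lemma psi_mk (p : MvPolynomial (V7 m o) ℂ) :
    psi m o i (Ideal.Quotient.mkₐ ℂ (J7 m o (o i)) p) = phi m o i p := by
  rw [psi, Ideal.Quotient.mkₐ_eq_mk, Ideal.Quotient.liftₐ_apply]
  rfl

lemma Epoly_true_split (j : ℕ) (hj : j + 1 ≤ o i) :
    Epoly m o true (j + 1) = X (Sum.inr ⟨i, ⟨j, by omega⟩⟩) +
      ∑ t ∈ (Finset.Nat.antidiagonalTuple m (j + 1)).erase (Pi.single i (j + 1)),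
        ∏ l : Fin m, xvar m o true l (t l) := by
  rw [Epoly, ← Finset.add_sum_erase _ _ (single_mem m i (j + 1))]
  congr 1
  rw [Fintype.prod_eq_single i (fun l hl => by rw [Pi.single_eq_of_ne hl]; simp [xvar])]
  rw [Pi.single_eq_same, xvar, dif_neg (by omega), dif_pos hj]
  simp

lemma exists_rename (p : MvPolynomial (V7 m o) ℂ) (hp : p ∈ supported ℂ (good7 m o i)) :
    ∃ q : MvPolynomial (good7 m o i) ℂ, rename Subtype.val q = p := by
  rw [supported_eq_range_rename] at hp
  exact hp

/-- With `k := o i ≤ o l` for all `l`, the composite of the inclusion of the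
polynomial subring of `P` generated by all variables except `x'_{i,1}, …, x'_{i,k}` with the
quotient map `P → T = P/⟨E'_j − E_j : 1 ≤ j ≤ k⟩` is an isomorphism of `ℂ`-algebras;
in particular `T` is a polynomial ring. -/
theorem statement7 (m : ℕ) (hm : 1 ≤ m) (o : Fin m → ℕ) (ho : ∀ l, 1 ≤ o l)
    (i : Fin m) (hmin : ∀ l, o i ≤ o l) :
    Function.Bijective
        ⇑((Ideal.Quotient.mkₐ ℂ (J7 m o (o i))).comp
          (MvPolynomial.supported ℂ (good7 m o i)).val) ∧
      Nonempty
        (MvPolynomial ↥(good7 m o i) ℂ ≃ₐ[ℂ] (MvPolynomial (V7 m o) ℂ ⧸ J7 m o (o i))) := by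
  set comp := (Ideal.Quotient.mkₐ ℂ (J7 m o (o i))).comp
      (MvPolynomial.supported ℂ (good7 m o i)).val with hcomp
  have hcompapply : ∀ x : supported ℂ (good7 m o i),
      comp x = Ideal.Quotient.mkₐ ℂ (J7 m o (o i)) (x : MvPolynomial (V7 m o) ℂ) :=
    fun x => rfl
  have hinj : Function.Injective ⇑comp := by
    intro a b hab
    obtain ⟨qa, hqa⟩ := exists_rename m o i _ a.2
    obtain ⟨qb, hqb⟩ := exists_rename m o i _ b.2
    have h1 : phi m o i (a : MvPolynomial (V7 m o) ℂ)
        = phi m o i (b : MvPolynomial (V7 m o) ℂ) := by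
      have h := congrArg (psi m o i) hab
      rw [hcompapply, hcompapply, psi_mk, psi_mk] at h
      exact h
    apply Subtype.ext
    rw [← hqa, ← hqb] at h1 ⊢
    rw [phi_rename, phi_rename] at h1
    rw [h1]
  have hS : ∀ p, p ∈ supported ℂ (good7 m o i) →
      Ideal.Quotient.mkₐ ℂ (J7 m o (o i)) p ∈ comp.range := fun p hp => ⟨⟨p, hp⟩, rfl⟩
  have hbad : ∀ j : ℕ, ∀ hj : j < o i,
      Ideal.Quotient.mkₐ ℂ (J7 m o (o i)) (X (Sum.inr ⟨i, ⟨j, hj⟩⟩)) ∈ comp.range := by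
    intro j
    induction j using Nat.strong_induction_on with
    | _ j IH =>
      intro hj
      have hrel : Epoly m o true (j + 1) - Epoly m o false (j + 1) ∈ J7 m o (o i) :=
        Ideal.subset_span ⟨j + 1, by omega, by omega, rfl⟩
      have h0 : Ideal.Quotient.mkₐ ℂ (J7 m o (o i)) (Epoly m o true (j + 1))
          = Ideal.Quotient.mkₐ ℂ (J7 m o (o i)) (Epoly m o false (j + 1)) := by
        rw [Ideal.Quotient.mkₐ_eq_mk, Ideal.Quotient.eq]
        exact hrel
      have hsplit := congrArg (Ideal.Quotient.mkₐ ℂ (J7 m o (o i)))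
        (Epoly_true_split m o i j (by omega))
      rw [map_add] at hsplit
      have hkey : Ideal.Quotient.mkₐ ℂ (J7 m o (o i)) (X (Sum.inr ⟨i, ⟨j, hj⟩⟩))
          = Ideal.Quotient.mkₐ ℂ (J7 m o (o i)) (Epoly m o false (j + 1)) -
            Ideal.Quotient.mkₐ ℂ (J7 m o (o i))
              (∑ t ∈ (Finset.Nat.antidiagonalTuple m (j + 1)).erase (Pi.single i (j + 1)),
                ∏ l : Fin m, xvar m o true l (t l)) := by
        rw [eq_sub_iff_add_eq, ← h0]
        exact hsplit.symm
      rw [hkey]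
      refine sub_mem (hS _ (Epoly_false_mem_supported m o i (j + 1))) ?_
      rw [map_sum]
      refine Subalgebra.sum_mem _ fun t ht => ?_
      rw [map_prod]
      refine Subalgebra.prod_mem _ fun l _ => ?_
      rw [Finset.mem_erase] at ht
      have hti := bound_of_ne_single m i ht.2 ht.1
      by_cases hl : l = i
      · rw [hl]
        rcases Nat.eq_zero_or_pos (t i) with h0' | h1'
        · rw [h0']
          simp only [xvar, dif_pos rfl, map_one]
          exact one_mem _
        · have htl : t i ≤ j := by rw [← hl]; rw [hl]; exact hti
          have hx : xvar m o true i (t i) = X (Sum.inr ⟨i, ⟨t i - 1, by omega⟩⟩) := by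
            rw [xvar, dif_neg (by omega), dif_pos (by omega)]
            rfl
          rw [hx]
          exact IH (t i - 1) (by omega) (by omega)
      · exact hS _ (xvar_mem_supported m o i true l (t l) fun _ => hl)
  have hX : ∀ v : V7 m o, Ideal.Quotient.mkₐ ℂ (J7 m o (o i)) (X v) ∈ comp.range := by
    intro v
    cases v with
    | inl p => exact hS _ (X_mem_supported.mpr (good_inl m o i p))
    | inr p =>
      obtain ⟨l, j⟩ := p
      by_cases hl : l = i
      · subst hl
        exact hbad j.1 j.2
      · exact hS _ (X_mem_supported.mpr (good_inr m o i hl j))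
  have hsurj : Function.Surjective ⇑comp := by
    intro y
    obtain ⟨p, rfl⟩ := Ideal.Quotient.mkₐ_surjective ℂ (I := J7 m o (o i)) y
    suffices h : Ideal.Quotient.mkₐ ℂ (J7 m o (o i)) p ∈ comp.range by exact h
    induction p using MvPolynomial.induction_on with
    | C a =>
      refine hS _ ?_
      rw [← MvPolynomial.algebraMap_eq]
      exact Subalgebra.algebraMap_mem _ a
    | add p q hp hq =>
      rw [map_add]
      exact add_mem hp hq
    | mul_X p n hp =>
      rw [map_mul]
      exact mul_mem hp (hX _)
  refine ⟨⟨hinj, hsurj⟩, ⟨(supportedEquivMvPolynomial (good7 m o i)).symm.trans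
    (AlgEquiv.ofBijective comp ⟨hinj, hsurj⟩)⟩⟩
end
end

section
/- Let k ≥ 1, n ≥ 0, and let X' = {x'_1,…,x'_k}, X = {x_1,…,x_k} and Y = {y_1,…,y_n} be pairwise disjoint sets of indeterminates. In the polynomial ring ℂ[X' ⊔ X ⊔ Y], the ideal generated by {e_j(X' ⊔ Y) − e_j(X ⊔ Y) : 1 ≤ j ≤ k} is equal to the ideal generated by {e_j(X') − e_j(X) : 1 ≤ j ≤ k}. -/
open MvPolynomial

set_option synthInstance.maxHeartbeats 400000
set_option maxHeartbeats 1000000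

noncomputable section

/-- The `j`-th elementary symmetric polynomial `e_j(U)` in the set of variables `U`,
with `e_0(U) = 1` and `e_j(U) = 0` for `j > |U|`. -/
def esymF {V : Type} [DecidableEq V] (U : Finset V) (j : ℕ) : MvPolynomial V ℂ :=
  ∑ t ∈ U.powersetCard j, ∏ v ∈ t, X v

/-- The variable set `X' ⊔ X ⊔ Y`. -/
abbrev V8 (k n : ℕ) : Type := Fin k ⊕ Fin k ⊕ Fin n

/-- The alphabet `X' = {x'_1, …, x'_k}`. -/
def FXp (k n : ℕ) : Finset (V8 k n) := Finset.univ.image Sum.inl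

/-- The alphabet `X = {x_1, …, x_k}`. -/
def FX (k n : ℕ) : Finset (V8 k n) :=
  Finset.univ.image fun a : Fin k => Sum.inr (Sum.inl a)

/-- The alphabet `Y = {y_1, …, y_n}`. -/
def FY (k n : ℕ) : Finset (V8 k n) :=
  Finset.univ.image fun a : Fin n => Sum.inr (Sum.inr a)

lemma esymF_eq_coeff {V : Type} [DecidableEq V] (S : Finset V) (j : ℕ) :
    esymF S j =
      (∏ i ∈ S, (Polynomial.C (X (R := ℂ) i) * Polynomial.X + 1)).coeff j := by
  rw [Finset.prod_add]
  have h : ∀ t ∈ S.powerset,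
      ((∏ i ∈ t, Polynomial.C (X (R := ℂ) i) * Polynomial.X) *
        ∏ i ∈ S \ t, (1 : Polynomial (MvPolynomial V ℂ))) =
      Polynomial.C (∏ i ∈ t, X i) * Polynomial.X ^ t.card := by
    intro t _
    rw [Finset.prod_const_one, mul_one, Finset.prod_mul_distrib, Finset.prod_const, map_prod]
  rw [Finset.sum_congr rfl h, Polynomial.finset_sum_coeff]
  simp_rw [Polynomial.coeff_C_mul, Polynomial.coeff_X_pow, mul_ite, mul_one, mul_zero]
  rw [esymF, Finset.powersetCard_eq_filter, Finset.sum_filter]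
  exact Finset.sum_congr rfl fun t _ => by simp [eq_comm]

lemma esymF_union {V : Type} [DecidableEq V] {U W : Finset V} (hd : Disjoint U W) (j : ℕ) :
    esymF (U ∪ W) j = ∑ p ∈ Finset.HasAntidiagonal.antidiagonal j, esymF U p.1 * esymF W p.2 := by
  simp_rw [esymF_eq_coeff]
  rw [Finset.prod_union hd, Polynomial.coeff_mul]

lemma esymF_zero {V : Type} [DecidableEq V] (U : Finset V) : esymF U 0 = 1 := by
  simp [esymF]

/-- In `ℂ[X' ⊔ X ⊔ Y]`, the ideal generated by
`{e_j(X' ⊔ Y) − e_j(X ⊔ Y) : 1 ≤ j ≤ k}` equals the ideal generated by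
`{e_j(X') − e_j(X) : 1 ≤ j ≤ k}`. -/
theorem statement8 (k n : ℕ) (hk : 1 ≤ k) :
    Ideal.span {f | ∃ j : ℕ, 1 ≤ j ∧ j ≤ k ∧
        f = esymF (FXp k n ∪ FY k n) j - esymF (FX k n ∪ FY k n) j} =
      Ideal.span {f | ∃ j : ℕ, 1 ≤ j ∧ j ≤ k ∧ f = esymF (FXp k n) j - esymF (FX k n) j} := by
  classical
  have hdXpY : Disjoint (FXp k n) (FY k n) := by
    simp [Finset.disjoint_left, FXp, FY]
  have hdXY : Disjoint (FX k n) (FY k n) := by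
    simp [Finset.disjoint_left, FX, FY]
  have key : ∀ j, esymF (FXp k n ∪ FY k n) j - esymF (FX k n ∪ FY k n) j =
      ∑ p ∈ Finset.HasAntidiagonal.antidiagonal j,
        (esymF (FXp k n) p.1 - esymF (FX k n) p.1) * esymF (FY k n) p.2 := by
    intro j
    rw [esymF_union hdXpY, esymF_union hdXY, ← Finset.sum_sub_distrib]
    exact Finset.sum_congr rfl fun p _ => (sub_mul _ _ _).symm
  have dX0 : esymF (FXp k n) 0 - esymF (FX k n) 0 = 0 := by
    rw [esymF_zero, esymF_zero, sub_self]
  apply le_antisymm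
  · rw [Ideal.span_le]
    rintro f ⟨j, hj1, hjk, rfl⟩
    rw [key j]
    refine Ideal.sum_mem _ fun p hp => ?_
    rcases Nat.eq_zero_or_pos p.1 with h0 | h1
    · rw [h0, dX0, zero_mul]; exact zero_mem _
    · refine Ideal.mul_mem_right _ _ (Ideal.subset_span ⟨p.1, h1, ?_, rfl⟩)
      exact le_trans (Finset.HasAntidiagonal.antidiagonal.fst_le hp) hjk
  · rw [Ideal.span_le]
    have main : ∀ j, 1 ≤ j → j ≤ k →
        esymF (FXp k n) j - esymF (FX k n) j ∈ Ideal.span {f | ∃ j : ℕ, 1 ≤ j ∧ j ≤ k ∧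
          f = esymF (FXp k n ∪ FY k n) j - esymF (FX k n ∪ FY k n) j} := by
      intro j
      induction j using Nat.strong_induction_on with
      | _ j IH =>
        intro hj1 hjk
        have hmem : ((j, 0) : ℕ × ℕ) ∈ Finset.HasAntidiagonal.antidiagonal j := by simp
        have hsplit := Finset.sum_erase_add (Finset.HasAntidiagonal.antidiagonal j)
          (fun p => (esymF (FXp k n) p.1 - esymF (FX k n) p.1) * esymF (FY k n) p.2) hmem
        have hrepr : esymF (FXp k n) j - esymF (FX k n) j =
            (esymF (FXp k n ∪ FY k n) j - esymF (FX k n ∪ FY k n) j) -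
            ∑ p ∈ (Finset.HasAntidiagonal.antidiagonal j).erase (j, 0),
              (esymF (FXp k n) p.1 - esymF (FX k n) p.1) * esymF (FY k n) p.2 := by
          rw [key j, ← hsplit]
          simp [esymF_zero]
        rw [hrepr]
        refine sub_mem (Ideal.subset_span ⟨j, hj1, hjk, rfl⟩)
          (Ideal.sum_mem _ fun p hp => ?_)
        obtain ⟨hne, hp'⟩ := Finset.mem_erase.mp hp
        have hadd := Finset.HasAntidiagonal.mem_antidiagonal.mp hp'
        have hne' : ¬(p.1 = j ∧ p.2 = 0) := by simpa [Prod.ext_iff] using hne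
        have hlt : p.1 < j := by omega
        rcases Nat.eq_zero_or_pos p.1 with h0 | h1
        · rw [h0, dX0, zero_mul]; exact zero_mem _
        · exact Ideal.mul_mem_right _ _ (IH p.1 hlt h1 (le_trans hlt.le hjk))
    rintro f ⟨j, hj1, hjk, rfl⟩
    exact main j hj1 hjk

end
end

section
/- Let X_1, X_2, Y_1, Y_2, A be pairwise disjoint finite sets of indeterminates with |X_1| = |Y_1| + |A| and |Y_2| = |X_2| + |A| (the case A = ∅ included). In the polynomial ring ℂ[X_1 ⊔ X_2 ⊔ Y_1 ⊔ Y_2 ⊔ A], let I be the ideal generated by {e_a(Y_1 ⊔ A) − e_a(X_1) : 1 ≤ a ≤ |X_1|} together with {e_b(Y_2) − e_b(X_2 ⊔ A) : 1 ≤ b ≤ |Y_2|}. Then e_j(X_1 ⊔ X_2) − e_j(Y_1 ⊔ Y_2) ∈ I for every j ≥ 1. (This is the single-crossing case of the claim that the relations e_j(⊔ incoming alphabets) = e_j(⊔ outgoing alphabets) hold in the ring 𝒱 attached to a braid diagram.) -/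
open MvPolynomial

set_option synthInstance.maxHeartbeats 400000
set_option maxHeartbeats 1000000

noncomputable section

namespace Stmt9

variable {V : Type} [DecidableEq V]

lemma esymF_zero (U : Finset V) : esymF U 0 = 1 := by
  simp [esymF]

lemma esymF_eq_zero {U : Finset V} {j : ℕ} (h : U.card < j) : esymF U j = 0 := by
  rw [esymF, Finset.powersetCard_eq_empty.2 h, Finset.sum_empty]

def genP (U : Finset V) : Polynomial (MvPolynomial V ℂ) :=
  ∏ v ∈ U, (Polynomial.C (X v) * Polynomial.X + 1)

lemma esymF_insert {v : V} {s : Finset V} (hv : v ∉ s) (j : ℕ) :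
    esymF (insert v s) (j + 1) = esymF s (j + 1) + X v * esymF s j := by
  rw [esymF, Finset.powersetCard_succ_insert hv, Finset.sum_union, esymF, esymF]
  · congr 1
    rw [Finset.sum_image, Finset.mul_sum]
    · refine Finset.sum_congr rfl fun t ht => ?_
      have hvt : v ∉ t := fun hc => hv ((Finset.mem_powersetCard.1 ht).1 hc)
      rw [Finset.prod_insert hvt]
    · intro t ht u hu h
      have hvt : v ∉ t := fun hc => hv ((Finset.mem_powersetCard.1 ht).1 hc)
      have hvu : v ∉ u := fun hc => hv ((Finset.mem_powersetCard.1 hu).1 hc)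
      have := congrArg (fun w : Finset V => w.erase v) h
      simpa [Finset.erase_insert hvt, Finset.erase_insert hvu] using this
  · rw [Finset.disjoint_right]
    intro t ht hts
    obtain ⟨u, hu, rfl⟩ := Finset.mem_image.1 ht
    exact hv ((Finset.mem_powersetCard.1 hts).1 (Finset.mem_insert_self v u))

lemma genP_coeff (U : Finset V) (j : ℕ) : (genP U).coeff j = esymF U j := by
  induction U using Finset.induction generalizing j with
  | empty =>
    cases j with
    | zero => simp [genP, esymF_zero]
    | succ n => simp [genP, esymF_eq_zero (show (∅ : Finset V).card < n + 1 by simp), Polynomial.coeff_one]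
  | insert _ _ hv _ =>
    rename_i v s ih
    rw [genP, Finset.prod_insert hv, ← genP]
    cases j with
    | zero => simp [esymF_zero, ih]
    | succ n =>
      rw [add_mul, one_mul, Polynomial.coeff_add, mul_assoc, Polynomial.coeff_C_mul,
        Polynomial.coeff_X_mul, ih, ih, esymF_insert hv]
      ring

lemma esymF_union {s t : Finset V} (hd : Disjoint s t) (j : ℕ) :
    esymF (s ∪ t) j = ∑ a ∈ Finset.range (j + 1), esymF s a * esymF t (j - a) := by
  have h : genP (s ∪ t) = genP s * genP t := by
    rw [genP, genP, genP, Finset.prod_union hd]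
  rw [← genP_coeff, h, Polynomial.coeff_mul,
    Finset.Nat.sum_antidiagonal_eq_sum_range_succ_mk]
  simp [genP_coeff]

end Stmt9

/-- The variable set `X_1 ⊔ X_2 ⊔ Y_1 ⊔ Y_2 ⊔ A`. -/
abbrev V9 (n1 n2 m1 m2 c : ℕ) : Type := Fin n1 ⊕ Fin n2 ⊕ Fin m1 ⊕ Fin m2 ⊕ Fin c

/-- The alphabet `X_1`. -/
def FX1 (n1 n2 m1 m2 c : ℕ) : Finset (V9 n1 n2 m1 m2 c) := Finset.univ.image Sum.inl

/-- The alphabet `X_2`. -/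
def FX2 (n1 n2 m1 m2 c : ℕ) : Finset (V9 n1 n2 m1 m2 c) :=
  Finset.univ.image fun a : Fin n2 => Sum.inr (Sum.inl a)

/-- The alphabet `Y_1`. -/
def FY1 (n1 n2 m1 m2 c : ℕ) : Finset (V9 n1 n2 m1 m2 c) :=
  Finset.univ.image fun a : Fin m1 => Sum.inr (Sum.inr (Sum.inl a))

/-- The alphabet `Y_2`. -/
def FY2 (n1 n2 m1 m2 c : ℕ) : Finset (V9 n1 n2 m1 m2 c) :=
  Finset.univ.image fun a : Fin m2 => Sum.inr (Sum.inr (Sum.inr (Sum.inl a)))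

/-- The alphabet `A`. -/
def FA (n1 n2 m1 m2 c : ℕ) : Finset (V9 n1 n2 m1 m2 c) :=
  Finset.univ.image fun a : Fin c => Sum.inr (Sum.inr (Sum.inr (Sum.inr a)))


/-- With `|X_1| = |Y_1| + |A|` and `|Y_2| = |X_2| + |A|`, for the ideal `I`
generated by `{e_a(Y_1 ⊔ A) − e_a(X_1) : 1 ≤ a ≤ |X_1|}` and
`{e_b(Y_2) − e_b(X_2 ⊔ A) : 1 ≤ b ≤ |Y_2|}`, one has
`e_j(X_1 ⊔ X_2) − e_j(Y_1 ⊔ Y_2) ∈ I` for every `j ≥ 1`. -/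
theorem statement9 (n1 n2 m1 m2 c : ℕ) (h1 : n1 = m1 + c) (h2 : m2 = n2 + c)
    (j : ℕ) (hj : 1 ≤ j) :
    esymF (FX1 n1 n2 m1 m2 c ∪ FX2 n1 n2 m1 m2 c) j -
        esymF (FY1 n1 n2 m1 m2 c ∪ FY2 n1 n2 m1 m2 c) j ∈
      Ideal.span
        ({f | ∃ a : ℕ, 1 ≤ a ∧ a ≤ n1 ∧
            f = esymF (FY1 n1 n2 m1 m2 c ∪ FA n1 n2 m1 m2 c) a - esymF (FX1 n1 n2 m1 m2 c) a} ∪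
          {f | ∃ b : ℕ, 1 ≤ b ∧ b ≤ m2 ∧
            f = esymF (FY2 n1 n2 m1 m2 c) b -
              esymF (FX2 n1 n2 m1 m2 c ∪ FA n1 n2 m1 m2 c) b}) := by
  set x1 := FX1 n1 n2 m1 m2 c with hx1
  set x2 := FX2 n1 n2 m1 m2 c with hx2
  set y1 := FY1 n1 n2 m1 m2 c with hy1
  set y2 := FY2 n1 n2 m1 m2 c with hy2
  set aa := FA n1 n2 m1 m2 c with haa
  set I := Ideal.span
        ({f | ∃ a : ℕ, 1 ≤ a ∧ a ≤ n1 ∧ f = esymF (y1 ∪ aa) a - esymF x1 a} ∪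
          {f | ∃ b : ℕ, 1 ≤ b ∧ b ≤ m2 ∧ f = esymF y2 b - esymF (x2 ∪ aa) b}) with hI
  -- cardinalities
  have cx1 : x1.card = n1 := by
    rw [hx1, FX1, Finset.card_image_of_injective _ Sum.inl_injective]; simp
  have cx2 : x2.card = n2 := by
    rw [hx2, FX2, Finset.card_image_of_injective]
    · simp
    · exact fun a b h => by simpa using h
  have cy1 : y1.card = m1 := by
    rw [hy1, FY1, Finset.card_image_of_injective]
    · simp
    · exact fun a b h => by simpa using h
  have cy2 : y2.card = m2 := by
    rw [hy2, FY2, Finset.card_image_of_injective]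
    · simp
    · exact fun a b h => by simpa using h
  have caa : aa.card = c := by
    rw [haa, FA, Finset.card_image_of_injective]
    · simp
    · exact fun a b h => by simpa using h
  -- disjointness
  have d12 : Disjoint x1 x2 := by
    rw [hx1, hx2, Finset.disjoint_left]; simp [FX1, FX2]
  have dy1a : Disjoint y1 aa := by
    rw [hy1, haa, Finset.disjoint_left]; simp [FY1, FA]
  have dx2a : Disjoint x2 aa := by
    rw [hx2, haa, Finset.disjoint_left]; simp [FX2, FA]
  have dy1x2 : Disjoint y1 x2 := by
    rw [hy1, hx2, Finset.disjoint_left]; simp [FY1, FX2]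
  have dax2 : Disjoint aa x2 := dx2a.symm
  have dy12 : Disjoint y1 y2 := by
    rw [hy1, hy2, Finset.disjoint_left]; simp [FY1, FY2]
  have dy1ax2 : Disjoint (y1 ∪ aa) x2 := Finset.disjoint_union_left.2 ⟨dy1x2, dax2⟩
  have dy1x2a : Disjoint y1 (x2 ∪ aa) := Finset.disjoint_union_right.2 ⟨dy1x2, dy1a⟩
  -- key congruences
  have key1 : ∀ a : ℕ, esymF (y1 ∪ aa) a - esymF x1 a ∈ I := by
    intro a
    rcases Nat.eq_zero_or_pos a with rfl | ha
    · rw [Stmt9.esymF_zero, Stmt9.esymF_zero, sub_self]; exact Ideal.zero_mem _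
    · by_cases hle : a ≤ n1
      · exact Ideal.subset_span (Or.inl ⟨a, ha, hle, rfl⟩)
      · push_neg at hle
        rw [Stmt9.esymF_eq_zero, Stmt9.esymF_eq_zero, sub_self]
        · exact Ideal.zero_mem _
        · omega
        · rw [Finset.card_union_of_disjoint dy1a, cy1, caa]; omega
  have key2 : ∀ b : ℕ, esymF y2 b - esymF (x2 ∪ aa) b ∈ I := by
    intro b
    rcases Nat.eq_zero_or_pos b with rfl | hb
    · rw [Stmt9.esymF_zero, Stmt9.esymF_zero, sub_self]; exact Ideal.zero_mem _
    · by_cases hle : b ≤ m2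
      · exact Ideal.subset_span (Or.inr ⟨b, hb, hle, rfl⟩)
      · push_neg at hle
        rw [Stmt9.esymF_eq_zero, Stmt9.esymF_eq_zero, sub_self]
        · exact Ideal.zero_mem _
        · rw [Finset.card_union_of_disjoint dx2a, cx2, caa]; omega
        · omega
  -- regroup the union
  have hre : (y1 ∪ aa) ∪ x2 = y1 ∪ (x2 ∪ aa) := by
    rw [Finset.union_assoc, Finset.union_comm aa x2]
  have mid : ∑ a ∈ Finset.range (j + 1), esymF (y1 ∪ aa) a * esymF x2 (j - a) =
      ∑ a ∈ Finset.range (j + 1), esymF y1 a * esymF (x2 ∪ aa) (j - a) := by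
    rw [← Stmt9.esymF_union dy1ax2, ← Stmt9.esymF_union dy1x2a, hre]
  have expand : esymF (x1 ∪ x2) j - esymF (y1 ∪ y2) j =
      (∑ a ∈ Finset.range (j + 1),
          (esymF x1 a - esymF (y1 ∪ aa) a) * esymF x2 (j - a)) +
        ∑ k ∈ Finset.range (j + 1),
          esymF y1 k * (esymF (x2 ∪ aa) (j - k) - esymF y2 (j - k)) := by
    rw [Stmt9.esymF_union d12, Stmt9.esymF_union dy12]
    simp only [sub_mul, mul_sub, Finset.sum_sub_distrib, mid]
    ring
  rw [expand]
  refine add_mem (Ideal.sum_mem _ fun a _ => ?_) (Ideal.sum_mem _ fun k _ => ?_)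
  · have h := Ideal.mul_mem_right (esymF x2 (j - a)) _ (neg_mem (key1 a))
    rwa [neg_sub] at h
  · have h := Ideal.mul_mem_left _ (esymF y1 k) (neg_mem (key2 (j - k)))
    rwa [neg_sub] at h
end
end

section
/- Let m ≥ 1 and o(1),…,o(m) ≥ 1, and let R be the subalgebra of the polynomial ring ℂ[x_{l,j} : 1 ≤ l ≤ m, 1 ≤ j ≤ o(l)] consisting of polynomials that are separately symmetric in each alphabet X_l = {x_{l,1},…,x_{l,o(l)}} (i.e., invariant under the product of the symmetric groups permuting the variables within each alphabet). Then in R ⊗_ℂ R the family of elements {e_j(X_l) ⊗ 1 − 1 ⊗ e_j(X_l) : 1 ≤ l ≤ m, 1 ≤ j ≤ o(l)} is a regular sequence and generates the kernel of the multiplication map R ⊗_ℂ R → R. (Hence the Koszul complex of this family is a resolution of R by free R⊗R-modules, and the Hochschild homology of an R-bimodule M can be computed as the homology of M tensored with this Koszul complex.) -/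
open MvPolynomial

set_option synthInstance.maxHeartbeats 400000
set_option maxHeartbeats 1000000

noncomputable section

/-- The index type of the variables: `⟨l, j⟩` is the `j`-th variable of the `l`-th
alphabet `X_l`. -/
abbrev Idx {m : ℕ} (o : Fin m → ℕ) : Type := Σ l : Fin m, Fin (o l)

/-- The permutation of the variables induced by a family of permutations of the
individual alphabets. -/
def permIdx {m : ℕ} (o : Fin m → ℕ) (g : ∀ l, Equiv.Perm (Fin (o l))) : Idx o ≃ Idx o where
  toFun p := ⟨p.1, g p.1 p.2⟩
  invFun p := ⟨p.1, (g p.1).symm p.2⟩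
  left_inv p := by cases p; simp
  right_inv p := by cases p; simp

/-- The subalgebra of polynomials which are separately symmetric in each of the
alphabets `X_l`. -/
def sep {m : ℕ} (o : Fin m → ℕ) : Subalgebra ℂ (MvPolynomial (Idx o) ℂ) :=
  ⨅ g : ∀ l, Equiv.Perm (Fin (o l)),
    AlgHom.equalizer (rename ⇑(permIdx o g)) (AlgHom.id ℂ (MvPolynomial (Idx o) ℂ))

lemma mem_sep {m : ℕ} {o : Fin m → ℕ} {f : MvPolynomial (Idx o) ℂ} :
    f ∈ sep o ↔ ∀ g : ∀ l, Equiv.Perm (Fin (o l)), rename ⇑(permIdx o g) f = f := by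
  simp [sep, Algebra.mem_iInf, AlgHom.mem_equalizer]

/-- The finite set of variables belonging to the union of the alphabets `X_l`, `l ∈ s`. -/
def alphF {m : ℕ} (o : Fin m → ℕ) (s : Finset (Fin m)) : Finset (Idx o) :=
  Finset.univ.filter fun p => p.1 ∈ s

/-- The `j`-th elementary symmetric polynomial of the union of the alphabets `X_l`, `l ∈ s`. -/
def esymPoly {m : ℕ} (o : Fin m → ℕ) (s : Finset (Fin m)) (j : ℕ) :
    MvPolynomial (Idx o) ℂ :=
  ∑ t ∈ (alphF o s).powersetCard j, ∏ v ∈ t, X v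

lemma esymPoly_mem {m : ℕ} (o : Fin m → ℕ) (s : Finset (Fin m)) (j : ℕ) :
    esymPoly o s j ∈ sep o := by
  rw [mem_sep]
  intro g
  unfold esymPoly
  rw [map_sum]
  refine Finset.sum_nbij' (fun t => t.image (permIdx o g))
    (fun t => t.image (permIdx o g).symm) ?_ ?_ ?_ ?_ ?_
  · intro a ha
    rw [Finset.mem_powersetCard] at ha ⊢
    refine ⟨?_, ?_⟩
    · intro v hv
      rcases Finset.mem_image.mp hv with ⟨w, hw, rfl⟩
      have hw' := ha.1 hw
      simp only [alphF, Finset.mem_filter, Finset.mem_univ, true_and] at hw' ⊢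
      exact hw'
    · rw [Finset.card_image_of_injective _ (permIdx o g).injective]
      exact ha.2
  · intro a ha
    rw [Finset.mem_powersetCard] at ha ⊢
    refine ⟨?_, ?_⟩
    · intro v hv
      rcases Finset.mem_image.mp hv with ⟨w, hw, rfl⟩
      have hw' := ha.1 hw
      simp only [alphF, Finset.mem_filter, Finset.mem_univ, true_and] at hw' ⊢
      exact hw'
    · rw [Finset.card_image_of_injective _ (permIdx o g).symm.injective]
      exact ha.2
  · intro a _
    simp [Finset.image_image, Function.comp_def]
  · intro a _
    simp [Finset.image_image, Function.comp_def]
  · intro a _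
    rw [map_prod]
    simp only [rename_X]
    exact (Finset.prod_image fun x _ y _ hxy => (permIdx o g).injective hxy).symm

/-- The `j`-th elementary symmetric polynomial of `⊔_{l ∈ s} X_l` as an element of the
algebra of separately symmetric polynomials. -/
def Esub {m : ℕ} (o : Fin m → ℕ) (s : Finset (Fin m)) (j : ℕ) : sep o :=
  ⟨esymPoly o s j, esymPoly_mem o s j⟩

open scoped TensorProduct

/-- The element `e_j(X_l) ⊗ 1 − 1 ⊗ e_j(X_l)` of `R ⊗_ℂ R`. -/
def HHgen {m : ℕ} (o : Fin m → ℕ) (l : Fin m) (j : ℕ) : (sep o) ⊗[ℂ] (sep o) :=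
  (Esub o {l} j) ⊗ₜ[ℂ] (1 : sep o) - (1 : sep o) ⊗ₜ[ℂ] (Esub o {l} j)

/-- The family `{e_j(X_l) ⊗ 1 − 1 ⊗ e_j(X_l)}` listed as a sequence
(`l` in the outer loop, `j = 1, …, o l` in the inner loop). -/
def HHseq {m : ℕ} (o : Fin m → ℕ) : List ((sep o) ⊗[ℂ] (sep o)) :=
  (List.finRange m).flatMap fun l => (List.range (o l)).map fun j => HHgen o l (j + 1)

namespace Statement11Aux

open MvPolynomial

universe u

variable {m : ℕ} (o : Fin m → ℕ) (A : Type u) [CommRing A]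

/-- `e_{j+1}` of the `l`-th alphabet, with coefficients in `A`. -/
noncomputable def gen (p : Idx o) : MvPolynomial (Idx o) A :=
  rename (Sigma.mk p.1) (esymm (Fin (o p.1)) A ((p.2 : ℕ) + 1))

/-- The algebra endomorphism sending the variable `x_{l,j}` to `e_{j+1}(X_l)`. -/
noncomputable def EE : MvPolynomial (Idx o) A →ₐ[A] MvPolynomial (Idx o) A :=
  aeval (gen o A)

/-- Separately symmetric. -/
def SepInv (p : MvPolynomial (Idx o) A) : Prop :=
  ∀ g : ∀ l, Equiv.Perm (Fin (o l)), rename (⇑(permIdx o g)) p = p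

section Peel

variable {m : ℕ} (o : Fin (m + 1) → ℕ)

/-- Peel off the `0`-th alphabet. -/
def peel : Idx o ≃ (Fin (o 0) ⊕ Idx (fun l : Fin m => o l.succ)) where
  toFun p := Fin.cases (motive := fun l => Fin (o l) → Fin (o 0) ⊕ Idx (fun l : Fin m => o l.succ))
    Sum.inl (fun l j => Sum.inr ⟨l, j⟩) p.1 p.2
  invFun := Sum.elim (fun j => ⟨0, j⟩) (fun q => ⟨q.1.succ, q.2⟩)
  left_inv p := by rcases p with ⟨l, j⟩; induction l using Fin.cases <;> simp
  right_inv q := by rcases q with j | ⟨l, j⟩ <;> simp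

@[simp] lemma peel_zero (j : Fin (o 0)) : peel o ⟨0, j⟩ = Sum.inl j := by simp [peel]

@[simp] lemma peel_succ (l : Fin m) (j : Fin (o l.succ)) :
    peel o ⟨l.succ, j⟩ = Sum.inr ⟨l, j⟩ := by simp [peel]

variable (A : Type u) [CommRing A]

/-- The isomorphism separating out the `0`-th alphabet. -/
noncomputable def ρ : MvPolynomial (Idx o) A ≃ₐ[A]
    MvPolynomial (Fin (o 0)) (MvPolynomial (Idx (fun l : Fin m => o l.succ)) A) :=
  (renameEquiv A (peel o)).trans (sumAlgEquiv A _ _)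

@[simp] lemma ρ_X_zero (j : Fin (o 0)) : ρ o A (X ⟨0, j⟩) = X j := by
  simp [ρ, peel_zero, sumAlgEquiv_X_inl]

@[simp] lemma ρ_X_succ (l : Fin m) (j : Fin (o l.succ)) :
    ρ o A (X ⟨l.succ, j⟩) = C (X ⟨l, j⟩) := by
  simp [ρ, peel_succ, sumAlgEquiv_X_inr]

end Peel

end Statement11Aux

namespace Statement11Aux

open MvPolynomial

universe u

section Peel

variable {m : ℕ} (o : Fin (m + 1) → ℕ) (A : Type u) [CommRing A]

/-- coefficient ring: polynomials in the remaining alphabets -/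
abbrev Bc : Type u := MvPolynomial (Idx fun l : Fin m => o l.succ) A

/-- Single-alphabet `esymm` substitution, base ring `Bc`. -/
noncomputable def F1 : MvPolynomial (Fin (o 0)) (Bc o A) →ₐ[Bc o A] MvPolynomial (Fin (o 0)) (Bc o A) :=
  aeval (fun i : Fin (o 0) => esymm (Fin (o 0)) (Bc o A) ((i : ℕ) + 1))

lemma F1_eq (x : MvPolynomial (Fin (o 0)) (Bc o A)) :
    F1 o A x = (esymmAlgHom (Fin (o 0)) (Bc o A) (o 0) x : MvPolynomial (Fin (o 0)) (Bc o A)) := by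
  rw [esymmAlgHom_apply]; rfl

lemma ρ_gen_zero (j : Fin (o 0)) :
    ρ o A (gen o A ⟨0, j⟩) = esymm (Fin (o 0)) (Bc o A) ((j : ℕ) + 1) := by
  have h1 : (⇑(peel o)) ∘ (Sigma.mk (0 : Fin (m + 1))) = Sum.inl := by
    funext i; exact peel_zero o i
  have h2 := congrArg
    (fun F : MvPolynomial (Fin (o 0)) A →ₐ[A] MvPolynomial (Fin (o 0)) (Bc o A) =>
      F (esymm (Fin (o 0)) A ((j : ℕ) + 1)))
    (sumAlgEquiv_comp_rename_inl A (Fin (o 0)) (Idx fun l : Fin m => o l.succ))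
  simp only [AlgHom.comp_apply, AlgEquiv.toAlgHom_eq_coe, AlgHom.coe_coe, AlgEquiv.coe_toAlgHom] at h2
  show (sumAlgEquiv A (Fin (o 0)) (Idx fun l : Fin m => o l.succ)) (rename (⇑(peel o)) _) = _
  rw [gen, rename_rename, h1, h2]
  show map _ _ = _
  rw [map_esymm]

lemma ρ_gen_succ (l : Fin m) (j : Fin (o l.succ)) :
    ρ o A (gen o A ⟨l.succ, j⟩) = C (gen (fun l : Fin m => o l.succ) A ⟨l, j⟩) := by
  have h1 : (⇑(peel o)) ∘ (Sigma.mk l.succ) =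
      Sum.inr ∘ (fun j' : Fin (o l.succ) => (⟨l, j'⟩ : Idx fun l' : Fin m => o l'.succ)) := by
    funext i; exact peel_succ o l i
  have h2 := congrArg
    (fun F : Bc o A →ₐ[A] MvPolynomial (Fin (o 0)) (Bc o A) =>
      F (rename (fun j' : Fin (o l.succ) => (⟨l, j'⟩ : Idx fun l' : Fin m => o l'.succ))
        (esymm (Fin (o l.succ)) A ((j : ℕ) + 1))))
    (sumAlgEquiv_comp_rename_inr A (Fin (o 0)) (Idx fun l : Fin m => o l.succ))
  simp only [AlgHom.comp_apply, AlgEquiv.toAlgHom_eq_coe, AlgHom.coe_coe, AlgEquiv.coe_toAlgHom] at h2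
  show (sumAlgEquiv A (Fin (o 0)) (Idx fun l : Fin m => o l.succ)) (rename (⇑(peel o)) _) = _
  rw [gen, rename_rename, h1, ← rename_rename, h2]
  rfl

end Peel

end Statement11Aux

namespace Statement11Aux

open MvPolynomial

universe u

section Peel

variable {m : ℕ} (o : Fin (m + 1) → ℕ) (A : Type u) [CommRing A]

lemma keyComm :
    (((F1 o A).restrictScalars A).comp
      ((mapAlgHom (EE (fun l : Fin m => o l.succ) A)).comp (ρ o A).toAlgHom)) =
    (ρ o A).toAlgHom.comp (EE o A) := by
  apply MvPolynomial.algHom_ext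
  rintro ⟨l, j⟩
  induction l using Fin.cases with
  | zero =>
    simp only [AlgHom.comp_apply, AlgEquiv.toAlgHom_eq_coe, AlgHom.coe_coe, AlgEquiv.coe_toAlgHom,
      AlgHom.coe_restrictScalars']
    rw [show (EE o A) (X (⟨0, j⟩ : Idx o)) = gen o A ⟨0, j⟩ from aeval_X _ _,
      ρ_X_zero, ρ_gen_zero]
    rw [show (mapAlgHom (EE (fun l : Fin m => o l.succ) A)) (X j) = X j from map_X _ j]
    simp [F1]
  | succ l =>
    simp only [AlgHom.comp_apply, AlgEquiv.toAlgHom_eq_coe, AlgHom.coe_coe, AlgEquiv.coe_toAlgHom,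
      AlgHom.coe_restrictScalars']
    rw [show (EE o A) (X (⟨l.succ, j⟩ : Idx o)) = gen o A ⟨l.succ, j⟩ from aeval_X _ _,
      ρ_X_succ, ρ_gen_succ]
    rw [show (mapAlgHom (EE (fun l : Fin m => o l.succ) A)) (C (X ⟨l, j⟩))
        = C ((EE (fun l : Fin m => o l.succ) A) (X ⟨l, j⟩)) from map_C _ _]
    rw [show (EE (fun l : Fin m => o l.succ) A) (X ⟨l, j⟩)
        = gen (fun l : Fin m => o l.succ) A ⟨l, j⟩ from aeval_X _ _]
    simp [F1]

lemma conjPerm (g : ∀ l, Equiv.Perm (Fin (o l))) :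
    (ρ o A).toAlgHom.comp (rename (⇑(permIdx o g))) =
      (((rename (⇑(g 0)) : MvPolynomial (Fin (o 0)) (Bc o A) →ₐ[Bc o A]
          MvPolynomial (Fin (o 0)) (Bc o A)).restrictScalars A).comp
        ((mapAlgHom (rename (⇑(permIdx (fun l : Fin m => o l.succ) (fun l => g l.succ)))
            : Bc o A →ₐ[A] Bc o A)).comp (ρ o A).toAlgHom)) := by
  apply MvPolynomial.algHom_ext
  rintro ⟨l, j⟩
  induction l using Fin.cases with
  | zero =>
    simp only [AlgHom.comp_apply, AlgEquiv.toAlgHom_eq_coe, AlgHom.coe_coe, AlgEquiv.coe_toAlgHom,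
      AlgHom.coe_restrictScalars', rename_X]
    rw [show (⇑(permIdx o g)) ⟨0, j⟩ = (⟨0, g 0 j⟩ : Idx o) from rfl]
    rw [ρ_X_zero, ρ_X_zero]
    rw [show (mapAlgHom (rename (⇑(permIdx (fun l : Fin m => o l.succ) (fun l => g l.succ)))
          : Bc o A →ₐ[A] Bc o A)) (X j) = X j from map_X _ j, rename_X]
  | succ l =>
    simp only [AlgHom.comp_apply, AlgEquiv.toAlgHom_eq_coe, AlgHom.coe_coe, AlgEquiv.coe_toAlgHom,
      AlgHom.coe_restrictScalars', rename_X]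
    rw [show (⇑(permIdx o g)) ⟨l.succ, j⟩ = (⟨l.succ, g l.succ j⟩ : Idx o) from rfl]
    rw [ρ_X_succ, ρ_X_succ]
    rw [show (mapAlgHom (rename (⇑(permIdx (fun l : Fin m => o l.succ) (fun l => g l.succ)))
          : Bc o A →ₐ[A] Bc o A)) (C (X ⟨l, j⟩))
        = C ((rename (⇑(permIdx (fun l : Fin m => o l.succ) (fun l => g l.succ)))) (X ⟨l, j⟩))
          from map_C _ _, rename_X]
    rw [show (⇑(permIdx (fun l : Fin m => o l.succ) (fun l => g l.succ))) ⟨l, j⟩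
        = (⟨l, g l.succ j⟩ : Idx fun l : Fin m => o l.succ) from rfl]
    exact (rename_C (⇑(g 0)) _).symm

lemma permIdx_one : ⇑(permIdx (fun l : Fin m => o l.succ) (fun _ => 1)) = id := by
  funext p; rcases p with ⟨l, j⟩; rfl

lemma helper1 (p : MvPolynomial (Idx o) A) (e : Equiv.Perm (Fin (o 0))) :
    rename (⇑(permIdx o (Fin.cases e fun _ => 1))) p = p ↔
      rename ⇑e (ρ o A p) = ρ o A p := by
  have h := DFunLike.congr_fun (conjPerm o A (Fin.cases e fun _ => 1)) p
  simp only [AlgHom.comp_apply, AlgEquiv.toAlgHom_eq_coe, AlgHom.coe_coe, AlgEquiv.coe_toAlgHom,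
    AlgHom.coe_restrictScalars'] at h
  have h2 : (fun l : Fin m => (Fin.cases (motive := fun l => Equiv.Perm (Fin (o l)))
      e (fun _ => 1)) l.succ) = fun _ => 1 := by
    funext l; simp
  rw [h2, permIdx_one] at h
  have h3 : (rename (id : Idx (fun l : Fin m => o l.succ) → Idx (fun l : Fin m => o l.succ))
      : Bc o A →ₐ[A] Bc o A) = AlgHom.id A (Bc o A) := by
    exact AlgHom.ext fun q => rename_id_apply q
  rw [h3, mapAlgHom_id] at h
  simp only [AlgHom.coe_id, id_eq, Fin.cases_zero] at h
  constructor
  · intro hp; rw [← h, hp]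
  · intro hp; apply (ρ o A).injective; rw [h, hp]

lemma helper2 (p : MvPolynomial (Idx o) A)
    (g' : ∀ l : Fin m, Equiv.Perm (Fin (o l.succ))) :
    rename (⇑(permIdx o (Fin.cases 1 g'))) p = p ↔
      (mapAlgHom (rename (⇑(permIdx (fun l : Fin m => o l.succ) g')) : Bc o A →ₐ[A] Bc o A))
        (ρ o A p) = ρ o A p := by
  have h := DFunLike.congr_fun (conjPerm o A (Fin.cases 1 g')) p
  simp only [AlgHom.comp_apply, AlgEquiv.toAlgHom_eq_coe, AlgHom.coe_coe, AlgEquiv.coe_toAlgHom,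
    AlgHom.coe_restrictScalars'] at h
  have h2 : (fun l : Fin m => (Fin.cases (motive := fun l => Equiv.Perm (Fin (o l)))
      1 g') l.succ) = g' := by
    funext l; simp
  rw [h2] at h
  simp only [Fin.cases_zero, Equiv.Perm.coe_one] at h
  rw [show (rename (id : Fin (o 0) → Fin (o 0)) : MvPolynomial (Fin (o 0)) (Bc o A) →ₐ[Bc o A]
      MvPolynomial (Fin (o 0)) (Bc o A)) ((mapAlgHom (rename
      (⇑(permIdx (fun l : Fin m => o l.succ) g')) : Bc o A →ₐ[A] Bc o A)) (ρ o A p))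
      = (mapAlgHom (rename (⇑(permIdx (fun l : Fin m => o l.succ) g')) : Bc o A →ₐ[A] Bc o A))
        (ρ o A p) from rename_id_apply _] at h
  constructor
  · intro hp; rw [← h, hp]
  · intro hp; apply (ρ o A).injective; rw [h, hp]

lemma permIdx_decomp (g : ∀ l, Equiv.Perm (Fin (o l))) :
    ⇑(permIdx o g) = ⇑(permIdx o (Fin.cases (g 0) fun _ => 1)) ∘
      ⇑(permIdx o (Fin.cases 1 fun l => g l.succ)) := by
  funext p
  rcases p with ⟨l, j⟩
  induction l using Fin.cases with
  | zero => simp [permIdx]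
  | succ l => simp [permIdx]

lemma sepInv_iff (p : MvPolynomial (Idx o) A) :
    SepInv o A p ↔
      ((∀ e : Equiv.Perm (Fin (o 0)), rename ⇑e (ρ o A p) = ρ o A p) ∧
       (∀ g' : ∀ l : Fin m, Equiv.Perm (Fin (o l.succ)),
        (mapAlgHom (rename (⇑(permIdx (fun l : Fin m => o l.succ) g')) : Bc o A →ₐ[A] Bc o A))
          (ρ o A p) = ρ o A p)) := by
  constructor
  · intro h
    exact ⟨fun e => (helper1 o A p e).1 (h _), fun g' => (helper2 o A p g').1 (h _)⟩
  · rintro ⟨h1, h2⟩ g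
    rw [permIdx_decomp o g, ← rename_rename]
    rw [(helper2 o A p _).2 (h2 _), (helper1 o A p _).2 (h1 _)]

end Peel

end Statement11Aux

namespace Statement11Aux

open MvPolynomial

universe u v

lemma mem_range_map_iff {R : Type u} {S : Type v} {σ : Type} [CommRing R] [CommRing S]
    (f : R →+* S) (Q : MvPolynomial σ S) :
    Q ∈ Set.range ⇑(map (σ := σ) f) ↔ ∀ d, coeff d Q ∈ Set.range f := by
  constructor
  · rintro ⟨q, rfl⟩ d
    exact ⟨coeff d q, (coeff_map f q d).symm⟩
  · intro h
    choose c hc using h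
    refine ⟨∑ d ∈ Q.support, monomial d (c d), ?_⟩
    rw [map_sum]
    simp_rw [map_monomial, hc]
    exact (as_sum Q).symm

section Peel

variable {m : ℕ} (o : Fin (m + 1) → ℕ) (A : Type u) [CommRing A]

lemma mapAlgHom_apply' (f : Bc o A →ₐ[A] Bc o A) (Q : MvPolynomial (Fin (o 0)) (Bc o A)) :
    (mapAlgHom f : MvPolynomial (Fin (o 0)) (Bc o A) →ₐ[A] MvPolynomial (Fin (o 0)) (Bc o A)) Q
      = map (↑f : Bc o A →+* Bc o A) Q := rfl

lemma coefInv_iff (Q : MvPolynomial (Fin (o 0)) (Bc o A)) :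
    (∀ g' : ∀ l : Fin m, Equiv.Perm (Fin (o l.succ)),
      (mapAlgHom (rename (⇑(permIdx (fun l : Fin m => o l.succ) g')) : Bc o A →ₐ[A] Bc o A)) Q = Q)
    ↔ ∀ d, SepInv (fun l : Fin m => o l.succ) A (coeff d Q) := by
  constructor
  · intro h d g'
    have := congrArg (coeff d) (h g')
    rwa [mapAlgHom_apply', coeff_map] at this
  · intro h g'
    apply MvPolynomial.ext
    intro d
    rw [mapAlgHom_apply', coeff_map]
    exact h d g'

lemma commF (y : MvPolynomial (Fin (o 0)) (Bc o A)) :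
    (mapAlgHom (EE (fun l : Fin m => o l.succ) A)) (F1 o A y)
      = F1 o A ((mapAlgHom (EE (fun l : Fin m => o l.succ) A)) y) := by
  have h : ((mapAlgHom (EE (fun l : Fin m => o l.succ) A)).toRingHom.comp (F1 o A).toRingHom)
      = ((F1 o A).toRingHom.comp (mapAlgHom (EE (fun l : Fin m => o l.succ) A)).toRingHom) := by
    apply MvPolynomial.ringHom_ext
    · intro b
      simp only [RingHom.comp_apply, AlgHom.toRingHom_eq_coe, RingHom.coe_coe]
      rw [show (F1 o A) (C b) = C b from aeval_C _ b,
        show (mapAlgHom (EE (fun l : Fin m => o l.succ) A)) (C b)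
          = C ((EE (fun l : Fin m => o l.succ) A) b) from map_C _ b,
        show (F1 o A) (C ((EE (fun l : Fin m => o l.succ) A) b))
          = C ((EE (fun l : Fin m => o l.succ) A) b) from aeval_C _ _]
    · intro i
      simp only [RingHom.comp_apply, AlgHom.toRingHom_eq_coe, RingHom.coe_coe]
      rw [show (F1 o A) (X i) = esymm (Fin (o 0)) (Bc o A) ((i : ℕ) + 1) from aeval_X _ i,
        show (mapAlgHom (EE (fun l : Fin m => o l.succ) A)) (X i) = X i from map_X _ i,
        show (F1 o A) (X i) = esymm (Fin (o 0)) (Bc o A) ((i : ℕ) + 1) from aeval_X _ i,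
        mapAlgHom_apply', map_esymm]
  exact DFunLike.congr_fun h y

end Peel

/-- The multi-alphabet fundamental theorem of elementary symmetric polynomials. -/
theorem mainFT : ∀ (m : ℕ) (o : Fin m → ℕ) (A : Type u) [CommRing A],
    Function.Injective ⇑(EE o A) ∧ Set.range ⇑(EE o A) = {p | SepInv o A p} := by
  intro m
  induction m with
  | zero =>
    intro o A _
    have hEE : EE o A = AlgHom.id A _ := by
      apply MvPolynomial.algHom_ext
      rintro ⟨l, j⟩
      exact l.elim0
    constructor
    · rw [hEE]; exact fun x y h => h
    · rw [hEE]
      ext p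
      simp only [AlgHom.coe_id, Set.range_id, Set.mem_univ, true_iff, Set.mem_setOf_eq]
      intro g
      have : ⇑(permIdx o g) = id := funext fun q => q.1.elim0
      rw [this, rename_id_apply]
  | succ m ih =>
    intro o A _
    obtain ⟨E'inj, hrange'⟩ := ih (fun l : Fin m => o l.succ) A
    -- injectivity of the three factors
    have F1inj : Function.Injective ⇑(F1 o A) := by
      intro x y hxy
      apply esymmAlgHom_injective (σ := Fin (o 0)) (Bc o A) (n := o 0) (by simp)
      apply Subtype.ext
      rw [← F1_eq, ← F1_eq, hxy]
    have mapE'inj : Function.Injective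
        ⇑(mapAlgHom (EE (fun l : Fin m => o l.succ) A) :
          MvPolynomial (Fin (o 0)) (Bc o A) →ₐ[A] MvPolynomial (Fin (o 0)) (Bc o A)) := by
      intro x y hxy
      rw [mapAlgHom_apply', mapAlgHom_apply'] at hxy
      exact map_injective _ E'inj hxy
    have hkey : ∀ q, ρ o A (EE o A q)
        = F1 o A ((mapAlgHom (EE (fun l : Fin m => o l.succ) A)) (ρ o A q)) := by
      intro q
      have := DFunLike.congr_fun (keyComm o A) q
      simpa using this.symm
    constructor
    · intro x y h
      apply (ρ o A).injective
      apply mapE'inj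
      apply F1inj
      rw [← hkey, ← hkey, h]
    · ext p
      constructor
      · rintro ⟨q, rfl⟩
        rw [Set.mem_setOf_eq, sepInv_iff]
        constructor
        · intro e
          rw [hkey, F1_eq]
          exact (esymmAlgHom (Fin (o 0)) (Bc o A) (o 0)
            ((mapAlgHom (EE (fun l : Fin m => o l.succ) A)) (ρ o A q))).2 e
        · rw [coefInv_iff]
          intro d
          rw [hkey, ← commF, mapAlgHom_apply', coeff_map]
          have : ((EE (fun l : Fin m => o l.succ) A) (coeff d (F1 o A (ρ o A q))))
              ∈ Set.range ⇑(EE (fun l : Fin m => o l.succ) A) := Set.mem_range_self _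
          rw [hrange'] at this
          exact this
      · intro hp
        rw [Set.mem_setOf_eq, sepInv_iff] at hp
        obtain ⟨hs, hc⟩ := hp
        set S' : Subalgebra A (Bc o A) := (EE (fun l : Fin m => o l.succ) A).range with hS'
        set ι : S' →+* Bc o A := (Subalgebra.val S').toRingHom with hι
        have hco : ∀ d, coeff d (ρ o A p) ∈ Set.range ⇑ι := by
          intro d
          have h1 : SepInv (fun l : Fin m => o l.succ) A (coeff d (ρ o A p)) :=
            (coefInv_iff o A (ρ o A p)).1 hc d
          have h2 : coeff d (ρ o A p) ∈ Set.range ⇑(EE (fun l : Fin m => o l.succ) A) := by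
            rw [hrange']; exact h1
          obtain ⟨z, hz⟩ := h2
          exact ⟨⟨coeff d (ρ o A p), ⟨z, hz⟩⟩, rfl⟩
        obtain ⟨qt, hqt⟩ := (mem_range_map_iff ι (ρ o A p)).2 hco
        have hqtsym : IsSymmetric qt := by
          intro e
          apply map_injective ι (fun a b hab => Subtype.ext hab)
          rw [map_rename, hqt, hs e]
        obtain ⟨r, hr⟩ := esymmAlgHom_surjective (σ := Fin (o 0)) S' (n := o 0) (by simp)
          ⟨qt, hqtsym⟩
        have hr' : aeval (fun i : Fin (o 0) => esymm (Fin (o 0)) S' ((i : ℕ) + 1)) r = qt := by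
          have := congrArg Subtype.val hr
          rwa [esymmAlgHom_apply] at this
        -- commuting map ι with the esymm substitution
        have commMapVal : ∀ z : MvPolynomial (Fin (o 0)) S',
            map ι (aeval (fun i : Fin (o 0) => esymm (Fin (o 0)) S' ((i : ℕ) + 1)) z)
              = F1 o A (map ι z) := by
          intro z
          have h : ((map (σ := Fin (o 0)) ι).comp
              (aeval (fun i : Fin (o 0) => esymm (Fin (o 0)) S' ((i : ℕ) + 1))).toRingHom)
              = ((F1 o A).toRingHom.comp (map (σ := Fin (o 0)) ι)) := by
            apply MvPolynomial.ringHom_ext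
            · intro s
              simp only [RingHom.comp_apply, AlgHom.toRingHom_eq_coe, RingHom.coe_coe]
              rw [show (aeval (fun i : Fin (o 0) => esymm (Fin (o 0)) S' ((i : ℕ) + 1))) (C s)
                  = C s from aeval_C _ s, map_C,
                show (F1 o A) (C (ι s)) = C (ι s) from aeval_C _ _]
            · intro i
              simp only [RingHom.comp_apply, AlgHom.toRingHom_eq_coe, RingHom.coe_coe]
              rw [show (aeval (fun i : Fin (o 0) => esymm (Fin (o 0)) S' ((i : ℕ) + 1))) (X i)
                  = esymm (Fin (o 0)) S' ((i : ℕ) + 1) from aeval_X _ i, map_esymm, map_X,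
                show (F1 o A) (X i) = esymm (Fin (o 0)) (Bc o A) ((i : ℕ) + 1) from aeval_X _ i]
          exact DFunLike.congr_fun h z
        have hρp : ρ o A p = F1 o A (map ι r) := by
          rw [← hqt, ← hr', commMapVal]
        have hcoeffr : ∀ d, coeff d (map ι r)
            ∈ Set.range ⇑(↑(EE (fun l : Fin m => o l.succ) A) : Bc o A →+* Bc o A) := by
          intro d
          rw [coeff_map]
          exact (coeff d r).2
        obtain ⟨r', hr''⟩ := (mem_range_map_iff
          (↑(EE (fun l : Fin m => o l.succ) A) : Bc o A →+* Bc o A) (map ι r)).2 hcoeffr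
        refine ⟨(ρ o A).symm r', ?_⟩
        apply (ρ o A).injective
        rw [hkey, AlgEquiv.apply_symm_apply, mapAlgHom_apply', hr'', hρp]

end Statement11Aux

namespace Statement11Aux

open MvPolynomial

variable {m : ℕ} (o : Fin m → ℕ)

lemma gen_c (p : Idx o) : gen o ℂ p = esymPoly o {p.1} ((p.2 : ℕ) + 1) := by
  rcases p with ⟨l, j⟩
  rw [gen, esymm, esymPoly, map_sum]
  have hinj : Function.Injective (fun j' : Fin (o l) => (⟨l, j'⟩ : Idx o)) := fun a b hab => by simpa using hab
  refine Finset.sum_nbij' (fun t => t.image (fun j' : Fin (o l) => (⟨l, j'⟩ : Idx o)))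
    (fun u => u.preimage (fun j' : Fin (o l) => (⟨l, j'⟩ : Idx o)) (hinj.injOn)) ?_ ?_ ?_ ?_ ?_
  · intro t ht
    rw [Finset.mem_powersetCard] at ht ⊢
    constructor
    · intro v hv
      rcases Finset.mem_image.mp hv with ⟨i, _, rfl⟩
      simp [alphF]
    · rw [Finset.card_image_of_injective _ hinj]; exact ht.2
  · intro u hu
    rw [Finset.mem_powersetCard] at hu ⊢
    have hsub : ∀ v ∈ u, v ∈ Set.range (fun j' : Fin (o l) => (⟨l, j'⟩ : Idx o)) := by
      intro v hv
      have := hu.1 hv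
      simp only [alphF, Finset.mem_filter, Finset.mem_univ, true_and,
        Finset.mem_singleton] at this
      rcases v with ⟨l', j'⟩
      cases this
      exact ⟨j', rfl⟩
    have himg : (u.preimage (fun j' : Fin (o l) => (⟨l, j'⟩ : Idx o)) (hinj.injOn)).image (fun j' : Fin (o l) => (⟨l, j'⟩ : Idx o)) = u := by
      apply Finset.coe_injective
      rw [Finset.coe_image, Finset.coe_preimage, Set.image_preimage_eq_inter_range]
      exact Set.inter_eq_self_of_subset_left (fun v hv => hsub v hv)
    constructor
    · exact Finset.subset_univ _
    · have := congrArg Finset.card himg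
      rwa [Finset.card_image_of_injective _ hinj, hu.2] at this
  · intro t _
    apply Finset.coe_injective
    rw [Finset.coe_preimage, Finset.coe_image, Set.preimage_image_eq _ hinj]
  · intro u hu
    rw [Finset.mem_powersetCard] at hu
    have hsub : ∀ v ∈ u, v ∈ Set.range (fun j' : Fin (o l) => (⟨l, j'⟩ : Idx o)) := by
      intro v hv
      have := hu.1 hv
      simp only [alphF, Finset.mem_filter, Finset.mem_univ, true_and,
        Finset.mem_singleton] at this
      rcases v with ⟨l', j'⟩
      cases this
      exact ⟨j', rfl⟩
    apply Finset.coe_injective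
    rw [Finset.coe_image, Finset.coe_preimage, Set.image_preimage_eq_inter_range]
    exact Set.inter_eq_self_of_subset_left (fun v hv => hsub v hv)
  · intro t _
    rw [map_prod]
    simp only [rename_X]
    exact (Finset.prod_image fun x _ y _ h => hinj h).symm

/-- The family of `Esub`'s indexed by the variables. -/
noncomputable def EsubF (p : Idx o) : sep o := Esub o {p.1} ((p.2 : ℕ) + 1)

/-- The algebra map realizing `sep o` as a polynomial algebra. -/
noncomputable def EEc : MvPolynomial (Idx o) ℂ →ₐ[ℂ] sep o := aeval (EsubF o)

lemma val_EEc (q : MvPolynomial (Idx o) ℂ) :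
    ((EEc o q : sep o) : MvPolynomial (Idx o) ℂ) = EE o ℂ q := by
  have h := congrArg (fun F : MvPolynomial (Idx o) ℂ →ₐ[ℂ] MvPolynomial (Idx o) ℂ => F q)
    (comp_aeval (f := EsubF o) (φ := (sep o).val))
  simp only [AlgHom.comp_apply] at h
  rw [EEc]
  show (sep o).val _ = _
  rw [h]
  have hfun : (fun i : Idx o => (sep o).val (EsubF o i)) = gen o ℂ :=
    funext fun p => (gen_c o p).symm
  rw [hfun, EE]

lemma EEc_bij : Function.Bijective (EEc o) := by
  constructor
  · intro x y h
    apply (mainFT m o ℂ).1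
    rw [← val_EEc, ← val_EEc, h]
  · rintro ⟨s, hs⟩
    have : s ∈ {p | SepInv o ℂ p} := by
      intro g
      exact (mem_sep.mp hs) g
    rw [← (mainFT m o ℂ).2] at this
    obtain ⟨q, hq⟩ := this
    refine ⟨q, ?_⟩
    apply Subtype.ext
    rw [val_EEc, hq]

/-- `sep o` is a polynomial algebra on the `Esub`'s. -/
noncomputable def Phi : MvPolynomial (Idx o) ℂ ≃ₐ[ℂ] sep o :=
  AlgEquiv.ofBijective (EEc o) (EEc_bij o)

lemma Phi_X (p : Idx o) : Phi o (X p) = Esub o {p.1} ((p.2 : ℕ) + 1) := aeval_X _ p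

lemma mem_adjoin_gens (s : sep o) :
    s ∈ Algebra.adjoin ℂ {x : sep o | ∃ l : Fin m, ∃ j : ℕ, 1 ≤ j ∧ j ≤ o l ∧ x = Esub o {l} j} := by
  obtain ⟨q, hq⟩ := (EEc_bij o).2 s
  have h1 : s ∈ (aeval (R := ℂ) (EsubF o)).range := ⟨q, hq⟩
  rw [← Algebra.adjoin_range_eq_range_aeval] at h1
  refine Algebra.adjoin_mono ?_ h1
  rintro x ⟨p, rfl⟩
  exact ⟨p.1, (p.2 : ℕ) + 1, le_add_self, p.2.isLt, rfl⟩

end Statement11Aux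

namespace Statement11Aux

open MvPolynomial

section Transfer

variable {A B : Type*} [CommRing A] [CommRing B]

lemma nonZD_transfer (e : A ≃+* B) (S : Set A) (x : A)
    (h : Ideal.Quotient.mk (Ideal.span S) x ∈ nonZeroDivisors (A ⧸ Ideal.span S)) :
    Ideal.Quotient.mk (Ideal.span (⇑e '' S)) (e x) ∈
      nonZeroDivisors (B ⧸ Ideal.span (⇑e '' S)) := by
  have hmap : Ideal.span (⇑e '' S) = Ideal.map (e : A →+* B) (Ideal.span S) :=
    (Ideal.map_span _ _).symm
  set q := Ideal.quotientEquiv (Ideal.span S) (Ideal.span (⇑e '' S)) e hmap with hq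
  rw [mem_nonZeroDivisors_iff_right] at h ⊢
  intro z hz
  obtain ⟨w, rfl⟩ := q.surjective z
  have hqmk : q (Ideal.Quotient.mk (Ideal.span S) x)
      = Ideal.Quotient.mk (Ideal.span (⇑e '' S)) (e x) := by
    rw [hq, Ideal.quotientEquiv_mk]
  have : q (w * Ideal.Quotient.mk (Ideal.span S) x) = 0 := by
    rw [map_mul, hqmk, hz]
  have hw : w * Ideal.Quotient.mk (Ideal.span S) x = 0 := by
    apply q.injective; rw [this, map_zero]
  rw [h w hw, map_zero]

end Transfer

section KillVars

variable {τ : Type} (s : Set τ) (i : τ)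

open Classical in
lemma quot_vars_nzd (hi : i ∉ s) :
    Ideal.Quotient.mk (Ideal.span ((fun j => (X j : MvPolynomial τ ℂ)) '' s)) (X i) ∈
      nonZeroDivisors (MvPolynomial τ ℂ ⧸
        Ideal.span ((fun j => (X j : MvPolynomial τ ℂ)) '' s)) := by
  classical
  set J : Ideal (MvPolynomial τ ℂ) := Ideal.span ((fun j => (X j : MvPolynomial τ ℂ)) '' s) with hJ
  set κ : MvPolynomial τ ℂ →ₐ[ℂ] MvPolynomial τ ℂ :=
    aeval (fun j => if j ∈ s then 0 else X j) with hκ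
  have hκX : ∀ j, κ (X j) = if j ∈ s then 0 else X j := fun j => aeval_X _ j
  have hdiff : ∀ p : MvPolynomial τ ℂ, p - κ p ∈ J := by
    intro p
    induction p using MvPolynomial.induction_on with
    | C c =>
      have : κ (C c) = C c := aeval_C _ c
      rw [this, sub_self]; exact J.zero_mem
    | add p q hp hq =>
      have : p + q - κ (p + q) = (p - κ p) + (q - κ q) := by rw [map_add]; ring
      rw [this]; exact J.add_mem hp hq
    | mul_X p j hp =>
      by_cases h : j ∈ s
      · have hX : (X j : MvPolynomial τ ℂ) ∈ J := Ideal.subset_span ⟨j, h, rfl⟩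
        have : κ (p * X j) = 0 := by rw [map_mul, hκX, if_pos h, mul_zero]
        rw [this, sub_zero]
        exact Ideal.mul_mem_left _ _ hX
      · have : p * X j - κ (p * X j) = (p - κ p) * X j := by
          rw [map_mul, hκX, if_neg h, sub_mul]
        rw [this]
        exact Ideal.mul_mem_right _ _ hp
  have hJker : ∀ q ∈ J, κ q = 0 := by
    intro q hq
    have : J ≤ RingHom.ker (κ : MvPolynomial τ ℂ →+* MvPolynomial τ ℂ) := by
      rw [hJ, Ideal.span_le]
      rintro x ⟨j, hj, rfl⟩
      rw [SetLike.mem_coe, RingHom.mem_ker]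
      show κ (X j) = 0
      rw [hκX, if_pos hj]
    exact this hq
  rw [mem_nonZeroDivisors_iff_right]
  intro z hz
  obtain ⟨p, rfl⟩ := Ideal.Quotient.mk_surjective z
  rw [← map_mul, Ideal.Quotient.eq_zero_iff_mem] at hz
  have h1 : κ (p * X i) = 0 := hJker _ hz
  rw [map_mul, hκX, if_neg hi] at h1
  have h2 : κ p = 0 := by
    rcases mul_eq_zero.mp h1 with h | h
    · exact h
    · exact absurd h (X_ne_zero i)
  have h3 : p ∈ J := by
    have := hdiff p
    rwa [h2, sub_zero] at this
  rwa [Ideal.Quotient.eq_zero_iff_mem]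

end KillVars

section Chain

variable {m : ℕ} (o : Fin m → ℕ)

/-- `X (inr i) ↦ X (inr i) + X (inl i)`. -/
noncomputable def theta : MvPolynomial (Idx o ⊕ Idx o) ℂ ≃ₐ[ℂ] MvPolynomial (Idx o ⊕ Idx o) ℂ :=
  AlgEquiv.ofAlgHom
    (aeval (Sum.elim (fun i => X (Sum.inl i)) (fun i => X (Sum.inr i) + X (Sum.inl i))))
    (aeval (Sum.elim (fun i => X (Sum.inl i)) (fun i => X (Sum.inr i) - X (Sum.inl i))))
    (by apply MvPolynomial.algHom_ext; rintro (i | i) <;> simp)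
    (by apply MvPolynomial.algHom_ext; rintro (i | i) <;> simp)

/-- The composite isomorphism from `R ⊗ R` to a polynomial ring carrying the
`HHgen`s to variables. -/
noncomputable def chi : ((sep o) ⊗[ℂ] (sep o)) ≃ₐ[ℂ] MvPolynomial (Idx o ⊕ Idx o) ℂ :=
  (((Algebra.TensorProduct.congr (Phi o) (Phi o)).symm.trans
    ((algebraTensorAlgEquiv ℂ (MvPolynomial (Idx o) ℂ)).restrictScalars ℂ)).trans
    (sumAlgEquiv ℂ (Idx o) (Idx o)).symm).trans (theta o)

lemma chi_HH (p : Idx o) : chi o (HHgen o p.1 ((p.2 : ℕ) + 1)) = X (Sum.inr p) := by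
  have h1 : HHgen o p.1 ((p.2 : ℕ) + 1)
      = (Algebra.TensorProduct.congr (Phi o) (Phi o))
          ((X p) ⊗ₜ[ℂ] (1 : MvPolynomial (Idx o) ℂ) - (1 : MvPolynomial (Idx o) ℂ) ⊗ₜ[ℂ] (X p)) := by
    rw [map_sub, Algebra.TensorProduct.congr_apply, Algebra.TensorProduct.congr_apply]
    rw [Algebra.TensorProduct.map_tmul, Algebra.TensorProduct.map_tmul]
    simp only [AlgEquiv.toAlgHom_eq_coe, AlgHom.coe_coe, AlgEquiv.coe_toAlgHom, map_one]
    rw [show (Phi o) (X p) = Esub o {p.1} ((p.2 : ℕ) + 1) from Phi_X o p]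
    rfl
  rw [chi]
  simp only [AlgEquiv.trans_apply, h1, AlgEquiv.symm_apply_apply]
  rw [map_sub, map_sub, map_sub]
  have h2 : ((algebraTensorAlgEquiv ℂ (MvPolynomial (Idx o) ℂ)).restrictScalars ℂ)
      ((X p) ⊗ₜ[ℂ] (1 : MvPolynomial (Idx o) ℂ)) = C (X p) := by
    show algebraTensorAlgEquiv ℂ (MvPolynomial (Idx o) ℂ) _ = _
    rw [algebraTensorAlgEquiv_tmul, map_one, smul_eq_C_mul, mul_one]
  have h3 : ((algebraTensorAlgEquiv ℂ (MvPolynomial (Idx o) ℂ)).restrictScalars ℂ)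
      ((1 : MvPolynomial (Idx o) ℂ) ⊗ₜ[ℂ] (X p)) = X p := by
    show algebraTensorAlgEquiv ℂ (MvPolynomial (Idx o) ℂ) _ = _
    rw [algebraTensorAlgEquiv_tmul, one_smul, map_X]
  rw [h2, h3]
  have h4 : (sumAlgEquiv ℂ (Idx o) (Idx o)).symm (C (X p)) = X (Sum.inr p) := by
    apply (sumAlgEquiv ℂ (Idx o) (Idx o)).injective
    rw [AlgEquiv.apply_symm_apply]
    rw [sumAlgEquiv_X_inr]
  have h5 : (sumAlgEquiv ℂ (Idx o) (Idx o)).symm (X p : MvPolynomial (Idx o) (MvPolynomial (Idx o) ℂ))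
      = X (Sum.inl p) := by
    apply (sumAlgEquiv ℂ (Idx o) (Idx o)).injective
    rw [AlgEquiv.apply_symm_apply]
    rw [sumAlgEquiv_X_inl]
  rw [h4, h5, theta]
  simp

/-- Enumeration of the variables in the order of `HHseq`. -/
def LIdx : List (Idx o) :=
  (List.finRange m).flatMap fun l => (List.finRange (o l)).map fun j => ⟨l, j⟩

lemma HHseq_eq : HHseq o = (LIdx o).map (fun p => HHgen o p.1 ((p.2 : ℕ) + 1)) := by
  rw [HHseq, LIdx, List.map_flatMap]
  congr 1
  funext l
  rw [List.map_map, ← List.map_coe_finRange_eq_range (n := o l), List.map_map]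
  rfl

lemma LIdx_nodup : (LIdx o).Nodup := by
  rw [LIdx, List.nodup_flatMap]
  constructor
  · intro l _
    exact (List.nodup_finRange (o l)).map (fun a b hab => by simpa using hab)
  · have : ∀ (a b : Fin m), a ≠ b → List.Disjoint
        ((List.finRange (o a)).map fun j => (⟨a, j⟩ : Idx o))
        ((List.finRange (o b)).map fun j => (⟨b, j⟩ : Idx o)) := by
      intro a b hab x hxa hxb
      rcases List.mem_map.mp hxa with ⟨j, _, rfl⟩
      rcases List.mem_map.mp hxb with ⟨j', _, h⟩
      exact hab (congrArg Sigma.fst h).symm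
    exact List.Pairwise.imp_of_mem (fun {a b} _ _ h => this a b h)
      ((List.nodup_finRange m).pairwise_of_forall_ne (fun a _ b _ h => h))
end Chain

end Statement11Aux

namespace Statement11Aux

open MvPolynomial

variable {m : ℕ} (o : Fin m → ℕ)

lemma ker_part :
    Ideal.span {x | ∃ l : Fin m, ∃ j : ℕ, 1 ≤ j ∧ j ≤ o l ∧ x = HHgen o l j} =
      RingHom.ker (Algebra.TensorProduct.lmul' ℂ (S := sep o)) := by
  have hker : RingHom.ker (Algebra.TensorProduct.lmul' ℂ (S := sep o)) =
      Ideal.span (Set.range fun s : sep o =>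
        (1 : sep o) ⊗ₜ[ℂ] s - s ⊗ₜ[ℂ] (1 : sep o)) :=
    (KaehlerDifferential.span_range_eq_ideal ℂ (sep o)).symm
  rw [hker]
  set J := Ideal.span {x | ∃ l : Fin m, ∃ j : ℕ, 1 ≤ j ∧ j ≤ o l ∧ x = HHgen o l j} with hJdef
  apply le_antisymm
  · rw [Ideal.span_le]
    rintro x ⟨l, j, h1, h2, rfl⟩
    rw [SetLike.mem_coe]
    have h3 : HHgen o l j
        = -((1 : sep o) ⊗ₜ[ℂ] (Esub o {l} j) - (Esub o {l} j) ⊗ₜ[ℂ] (1 : sep o)) := by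
      rw [HHgen]; ring
    rw [h3]
    convert Ideal.mul_mem_left (Ideal.span (Set.range fun s : sep o => (1 : sep o) ⊗ₜ[ℂ] s - s ⊗ₜ[ℂ] (1 : sep o))) (-1 : (sep o) ⊗[ℂ] (sep o)) (Ideal.subset_span ⟨Esub o {l} j, rfl⟩) using 1; ring
  · rw [Ideal.span_le]
    rintro x ⟨s, rfl⟩
    rw [SetLike.mem_coe]
    suffices h : s ⊗ₜ[ℂ] (1 : sep o) - (1 : sep o) ⊗ₜ[ℂ] s ∈ J by
      have h4 : (1 : sep o) ⊗ₜ[ℂ] s - s ⊗ₜ[ℂ] (1 : sep o)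
          = -(s ⊗ₜ[ℂ] (1 : sep o) - (1 : sep o) ⊗ₜ[ℂ] s) := by ring
      show (1 : sep o) ⊗ₜ[ℂ] s - s ⊗ₜ[ℂ] (1 : sep o) ∈ J
      rw [h4]; convert Ideal.mul_mem_left _ (-1) h using 1; ring
    let T : Subalgebra ℂ (sep o) :=
      { carrier := {a : sep o | a ⊗ₜ[ℂ] (1 : sep o) - (1 : sep o) ⊗ₜ[ℂ] a ∈ J}
        mul_mem' := by
          intro a b ha hb
          have e1 : (a ⊗ₜ[ℂ] (1 : sep o)) * (b ⊗ₜ[ℂ] (1 : sep o))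
              = (a * b) ⊗ₜ[ℂ] (1 : sep o) := by
            rw [Algebra.TensorProduct.tmul_mul_tmul, mul_one]
          have e2 : (a ⊗ₜ[ℂ] (1 : sep o)) * ((1 : sep o) ⊗ₜ[ℂ] b) = a ⊗ₜ[ℂ] b := by
            rw [Algebra.TensorProduct.tmul_mul_tmul, mul_one, one_mul]
          have e3 : ((1 : sep o) ⊗ₜ[ℂ] b) * (a ⊗ₜ[ℂ] (1 : sep o)) = a ⊗ₜ[ℂ] b := by
            rw [Algebra.TensorProduct.tmul_mul_tmul, mul_one, one_mul]
          have e4 : ((1 : sep o) ⊗ₜ[ℂ] b) * ((1 : sep o) ⊗ₜ[ℂ] a)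
              = (1 : sep o) ⊗ₜ[ℂ] (a * b) := by
            rw [Algebra.TensorProduct.tmul_mul_tmul, one_mul, mul_comm b a]
          have key : (a * b) ⊗ₜ[ℂ] (1 : sep o) - (1 : sep o) ⊗ₜ[ℂ] (a * b)
              = (a ⊗ₜ[ℂ] (1 : sep o)) * (b ⊗ₜ[ℂ] (1 : sep o) - (1 : sep o) ⊗ₜ[ℂ] b)
                + ((1 : sep o) ⊗ₜ[ℂ] b) * (a ⊗ₜ[ℂ] (1 : sep o) - (1 : sep o) ⊗ₜ[ℂ] a) := by
            rw [← e1, ← e4]; ring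
          show _ ∈ J
          rw [key]
          exact J.add_mem (Ideal.mul_mem_left _ _ hb) (Ideal.mul_mem_left _ _ ha)
        one_mem' := by
          show _ ∈ J
          rw [sub_self]; exact J.zero_mem
        add_mem' := by
          intro a b ha hb
          have key : (a + b) ⊗ₜ[ℂ] (1 : sep o) - (1 : sep o) ⊗ₜ[ℂ] (a + b)
              = (a ⊗ₜ[ℂ] (1 : sep o) - (1 : sep o) ⊗ₜ[ℂ] a)
                + (b ⊗ₜ[ℂ] (1 : sep o) - (1 : sep o) ⊗ₜ[ℂ] b) := by
            rw [TensorProduct.add_tmul, TensorProduct.tmul_add]; ring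
          show _ ∈ J
          rw [key]
          exact J.add_mem ha hb
        zero_mem' := by
          show _ ∈ J
          rw [TensorProduct.zero_tmul, TensorProduct.tmul_zero, sub_self]
          exact J.zero_mem
        algebraMap_mem' := by
          intro c
          show _ ∈ J
          have h5 : (algebraMap ℂ (sep o) c) ⊗ₜ[ℂ] (1 : sep o)
              = (1 : sep o) ⊗ₜ[ℂ] (algebraMap ℂ (sep o) c) := by
            rw [Algebra.algebraMap_eq_smul_one, TensorProduct.smul_tmul]
          rw [h5, sub_self]
          exact J.zero_mem }
    have hle : Algebra.adjoin ℂ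
        {x : sep o | ∃ l : Fin m, ∃ j : ℕ, 1 ≤ j ∧ j ≤ o l ∧ x = Esub o {l} j} ≤ T := by
      apply Algebra.adjoin_le
      rintro x ⟨l, j, h1, h2, rfl⟩
      show _ ∈ J
      exact Ideal.subset_span ⟨l, j, h1, h2, rfl⟩
    exact hle (mem_adjoin_gens o s)

lemma not_mem_take {α : Type*} {L : List α} (h : L.Nodup) {t : ℕ} (ht : t < L.length) :
    L[t] ∉ L.take t := by
  intro hmem
  have h2 : (L.take t ++ L.drop t).Nodup := by rw [List.take_append_drop]; exact h
  rw [List.nodup_append] at h2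
  have h3 : L[t] ∈ L.drop t := by
    rw [List.drop_eq_getElem_cons ht]; exact List.mem_cons_self
  exact h2.2.2 _ hmem _ h3 rfl

end Statement11Aux

namespace Statement11Aux

open MvPolynomial

lemma nonZD_transferA {A B : Type*} [CommRing A] [CommRing B] [Algebra ℂ A] [Algebra ℂ B]
    (e : A ≃ₐ[ℂ] B) (S : Set A) (x : A)
    (h : Ideal.Quotient.mk (Ideal.span S) x ∈ nonZeroDivisors (A ⧸ Ideal.span S)) :
    Ideal.Quotient.mk (Ideal.span (⇑e '' S)) (e x) ∈
      nonZeroDivisors (B ⧸ Ideal.span (⇑e '' S)) := by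
  have := nonZD_transfer e.toRingEquiv S x h
  simpa using this

end Statement11Aux

open Statement11Aux in
theorem statement11' (m : ℕ) (hm : 1 ≤ m) (o : Fin m → ℕ) (ho : ∀ l, 1 ≤ o l) :
    (∀ (t : ℕ) (ht : t < (HHseq o).length),
        Ideal.Quotient.mk (Ideal.span {x | x ∈ (HHseq o).take t}) ((HHseq o).get ⟨t, ht⟩) ∈
          nonZeroDivisors
            (@HasQuotient.Quotient _ _ (@Ideal.instHasQuotient _ Algebra.TensorProduct.instRing)
              (Ideal.span {x | x ∈ (HHseq o).take t}))) ∧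
      Ideal.span {x | ∃ l : Fin m, ∃ j : ℕ, 1 ≤ j ∧ j ≤ o l ∧ x = HHgen o l j} =
        RingHom.ker (Algebra.TensorProduct.lmul' ℂ (S := sep o)) := by
  constructor
  · intro t ht
    have hlen : (HHseq o).length = (LIdx o).length := by
      rw [HHseq_eq, List.length_map]
    have hlt : t < (LIdx o).length := hlen ▸ ht
    set p : Idx o := (LIdx o)[t]'hlt with hp
    have hget : (HHseq o).get ⟨t, ht⟩ = HHgen o p.1 ((p.2 : ℕ) + 1) := by
      rw [List.get_eq_getElem]
      have : (HHseq o)[t]'ht = ((LIdx o).map (fun y => HHgen o y.1 ((y.2 : ℕ) + 1)))[t]'(by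
        rw [List.length_map]; exact hlt) := by
        congr 1
        exact HHseq_eq o
      rw [this, List.getElem_map]
    have hnot : (Sum.inr p : Idx o ⊕ Idx o) ∉ (Sum.inr '' {y | y ∈ (LIdx o).take t}) := by
      rintro ⟨y, hy, hyp⟩
      have hyp' : y = p := Sum.inr_injective hyp
      subst hyp'
      exact not_mem_take (LIdx_nodup o) hlt hy
    have h0 := quot_vars_nzd (Sum.inr '' {y | y ∈ (LIdx o).take t}) (Sum.inr p) hnot
    have h1 := @nonZD_transferA _ _ _ Algebra.TensorProduct.instCommRing _ _ (chi o).symm _ _ h0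
    have hsymmHH : ∀ y : Idx o,
        (chi o).symm (X (Sum.inr y) : MvPolynomial (Idx o ⊕ Idx o) ℂ)
          = HHgen o y.1 ((y.2 : ℕ) + 1) := by
      intro y
      apply (chi o).injective
      rw [AlgEquiv.apply_symm_apply, chi_HH]
    have hS : (⇑(chi o).symm) ''
        ((fun j => (X j : MvPolynomial (Idx o ⊕ Idx o) ℂ)) ''
          (Sum.inr '' {y | y ∈ (LIdx o).take t}))
        = {x | x ∈ (HHseq o).take t} := by
      ext x
      constructor
      · rintro ⟨-, ⟨-, ⟨y, hy, rfl⟩, rfl⟩, rfl⟩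
        show (chi o).symm (X (Sum.inr y)) ∈ (HHseq o).take t
        rw [hsymmHH y, HHseq_eq, ← List.map_take]
        exact List.mem_map_of_mem hy
      · intro hx
        have hx' : x ∈ ((LIdx o).take t).map (fun y => HHgen o y.1 ((y.2 : ℕ) + 1)) := by
          rw [List.map_take, ← HHseq_eq]
          exact hx
        obtain ⟨y, hy, rfl⟩ := List.mem_map.mp hx'
        exact ⟨X (Sum.inr y), ⟨Sum.inr y, ⟨y, hy, rfl⟩, rfl⟩, hsymmHH y⟩
    rw [hS, hsymmHH p, ← hget] at h1
    exact h1
  · exact ker_part o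

/-- In `R ⊗_ℂ R`, where `R` is the algebra of separately symmetric
polynomials, the family `{e_j(X_l) ⊗ 1 − 1 ⊗ e_j(X_l) : 1 ≤ l ≤ m, 1 ≤ j ≤ o l}` is a
regular sequence (each term is a non-zero-divisor in the quotient by its predecessors) and
generates the kernel of the multiplication map `R ⊗_ℂ R → R`. -/
theorem statement11 (m : ℕ) (hm : 1 ≤ m) (o : Fin m → ℕ) (ho : ∀ l, 1 ≤ o l) :
    (∀ (t : ℕ) (ht : t < (HHseq o).length),
        Ideal.Quotient.mk (Ideal.span {x | x ∈ (HHseq o).take t}) ((HHseq o).get ⟨t, ht⟩) ∈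
          nonZeroDivisors
            (@HasQuotient.Quotient _ _ (@Ideal.instHasQuotient _ Algebra.TensorProduct.instRing)
              (Ideal.span {x | x ∈ (HHseq o).take t}))) ∧
      Ideal.span {x | ∃ l : Fin m, ∃ j : ℕ, 1 ≤ j ∧ j ≤ o l ∧ x = HHgen o l j} =
        RingHom.ker (Algebra.TensorProduct.lmul' ℂ (S := sep o)) := by
  exact statement11' m hm o ho
end
end

section
/- Let X', X_1, X_2 be pairwise disjoint finite sets of indeterminates with |X'| = |X_1| + |X_2|. Let R be the subalgebra of the polynomial ring ℂ[X' ⊔ X_1 ⊔ X_2] of polynomials separately symmetric in each of the three alphabets. Then: (i) the sequence e_1(X') − e_1(X_1 ⊔ X_2), e_2(X') − e_2(X_1 ⊔ X_2), …, e_{|X'|}(X') − e_{|X'|}(X_1 ⊔ X_2) is a regular sequence in R; and (ii) writing I for the ideal of R it generates, the composite of the inclusion of the subalgebra of R consisting of polynomials in the variables of X_1 ⊔ X_2 only (separately symmetric in X_1 and in X_2) with the quotient map R → R/I is an isomorphism of ℂ-algebras. (This is the key step showing that the positive homology of the Koszul matrix factorization associated to a merge/split web vertex is concentrated in homological degree zero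 and is isomorphic to the decoration bimodule of the web.) -/
open MvPolynomial

set_option synthInstance.maxHeartbeats 400000
set_option maxHeartbeats 1000000

noncomputable section

/-- The sequence `e_1(X')−e_1(X_1⊔X_2), …, e_{|X'|}(X')−e_{|X'|}(X_1⊔X_2)` in `R`.
The alphabets are numbered `0 ↦ X'`, `1 ↦ X_1`, `2 ↦ X_2`. -/
def seq13 (o : Fin 3 → ℕ) : List (sep o) :=
  (List.range (o 0)).map fun a => Esub o {0} (a + 1) - Esub o {1, 2} (a + 1)

/-- The subalgebra of `R` consisting of polynomials in the variables of `X_1 ⊔ X_2` only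
(separately symmetric in `X_1` and in `X_2`). -/
def T13 (o : Fin 3 → ℕ) : Subalgebra ℂ (sep o) :=
  (MvPolynomial.supported ℂ {v : Idx o | v.1 ≠ 0}).comap (sep o).val


section Key
variable {R : Type*} [CommRing R] {n : ℕ}

def keyHom (n : ℕ) (f : R →+* R) : MvPolynomial (Fin n) R →+* MvPolynomial (Fin n) R :=
  ((aeval fun i : Fin n => esymm (Fin n) R (i + 1)) : MvPolynomial (Fin n) R →ₐ[R] _).toRingHom.comp
    (MvPolynomial.map f)

lemma keyHom_X (f : R →+* R) (i : Fin n) :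
    keyHom n f (X i) = esymm (Fin n) R (i + 1) := by
  simp [keyHom]

lemma keyHom_C (f : R →+* R) (r : R) : keyHom n f (C r) = C (f r) := by
  simp [keyHom]

lemma keyHom_eq_comp (f : R →+* R) :
    keyHom n f = (MvPolynomial.map f).comp
      (((aeval fun i : Fin n => esymm (Fin n) R (i + 1)) :
        MvPolynomial (Fin n) R →ₐ[R] _) : MvPolynomial (Fin n) R →+* _) := by
  apply MvPolynomial.ringHom_ext
  · intro r; simp [keyHom_C, map_esymm, aeval_C]
  · intro i; simp [keyHom_X, map_esymm]

lemma aeval_esymm_isSymmetric (q : MvPolynomial (Fin n) R) :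
    ((aeval fun i : Fin n => esymm (Fin n) R (i + 1)) q).IsSymmetric := by
  have h : ((aeval fun i : Fin n => esymm (Fin n) R (i + 1)) q)
      = ((esymmAlgHom (Fin n) R n) q : MvPolynomial (Fin n) R) :=
    (esymmAlgHom_apply q).symm
  rw [h]
  exact ((esymmAlgHom (Fin n) R n) q).2

lemma keyHom_injective (f : R →+* R) (hf : Function.Injective f) :
    Function.Injective (keyHom n f) := by
  have h1 : Function.Injective (MvPolynomial.map (σ := Fin n) f) :=
    MvPolynomial.map_injective f hf
  have h2 : Function.Injective
      ((aeval fun i : Fin n => esymm (Fin n) R (i + 1)) : MvPolynomial (Fin n) R →ₐ[R] _) := by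
    have := esymmAlgHom_fin_injective (n := n) (m := n) R le_rfl
    intro a b hab
    apply this
    apply Subtype.ext
    simpa [esymmAlgHom_apply] using hab
  exact h2.comp h1

lemma keyHom_range (f : R →+* R) (hf : Function.Injective f) (p : MvPolynomial (Fin n) R) :
    p ∈ Set.range (keyHom n f) ↔ p.IsSymmetric ∧ ∀ m, coeff m p ∈ Set.range f := by
  constructor
  · rintro ⟨q, rfl⟩
    rw [keyHom_eq_comp]
    constructor
    · intro e
      simp only [RingHom.comp_apply, RingHom.coe_coe]
      rw [← map_rename]
      congr 1
      exact aeval_esymm_isSymmetric q e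
    · intro m
      simp only [RingHom.comp_apply, RingHom.coe_coe, coeff_map]
      exact ⟨_, rfl⟩
  · rintro ⟨hsym, hcoeff⟩
    set q0 : MvPolynomial (Fin n) R :=
      ∑ m ∈ p.support, monomial m (Classical.choose (hcoeff m)) with hq0
    have hmap : MvPolynomial.map f q0 = p := by
      rw [hq0, map_sum]
      conv_rhs => rw [p.as_sum]
      refine Finset.sum_congr rfl fun m _ => ?_
      rw [map_monomial, Classical.choose_spec (hcoeff m)]
    have hq0sym : q0.IsSymmetric := by
      intro e
      apply MvPolynomial.map_injective f hf
      rw [map_rename, hmap]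
      exact hsym e
    obtain ⟨r, hr⟩ := (esymmAlgHom_fin_bijective R n).2 ⟨q0, hq0sym⟩
    refine ⟨r, ?_⟩
    rw [keyHom_eq_comp]
    simp only [RingHom.comp_apply, RingHom.coe_coe]
    have : (aeval fun i : Fin n => esymm (Fin n) R (i + 1)) r = q0 := by
      rw [← esymmAlgHom_apply, hr]
    rw [this, hmap]
end Key
section Aux

variable (o : Fin 3 → ℕ)

abbrev B2' : Type := MvPolynomial (Fin (o 2)) ℂ
abbrev B1' : Type := MvPolynomial (Fin (o 1)) (B2' o)
abbrev P3' : Type := MvPolynomial (Fin (o 0)) (B1' o)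

def ι3 : Idx o ≃ (Fin (o 0) ⊕ (Fin (o 1) ⊕ Fin (o 2))) where
  toFun p := match p with
    | ⟨0, j⟩ => Sum.inl j
    | ⟨1, j⟩ => Sum.inr (Sum.inl j)
    | ⟨2, j⟩ => Sum.inr (Sum.inr j)
  invFun q := match q with
    | Sum.inl j => ⟨0, j⟩
    | Sum.inr (Sum.inl j) => ⟨1, j⟩
    | Sum.inr (Sum.inr j) => ⟨2, j⟩
  left_inv p := by
    obtain ⟨l, j⟩ := p
    fin_cases l <;> rfl
  right_inv q := by rcases q with j | j | j <;> rfl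

def T3 : MvPolynomial (Idx o) ℂ ≃ₐ[ℂ] P3' o :=
  (renameEquiv ℂ (ι3 o)).trans ((sumAlgEquiv ℂ _ _).trans
    (mapAlgEquiv _ (sumAlgEquiv ℂ _ _)))

@[simp] lemma T3_X0 (a : Fin (o 0)) : T3 o (X ⟨0, a⟩) = X a := by
  simp [T3, ι3]

@[simp] lemma T3_X1 (j : Fin (o 1)) : T3 o (X ⟨1, j⟩) = C (X j) := by
  simp [T3, ι3]

@[simp] lemma T3_X2 (j : Fin (o 2)) : T3 o (X ⟨2, j⟩) = C (C (X j)) := by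
  simp [T3, ι3]

end Aux
variable {m : ℕ}

def embIdx (o : Fin m → ℕ) (l : Fin m) : Fin (o l) ↪ Idx o :=
  ⟨fun j => ⟨l, j⟩, fun a b hab => by
    simpa using hab⟩

lemma alphF_single (o : Fin m → ℕ) (l : Fin m) :
    alphF o {l} = Finset.univ.map (embIdx o l) := by
  ext ⟨l', j⟩
  simp only [alphF, Finset.mem_filter, Finset.mem_univ, true_and, Finset.mem_singleton]
  constructor
  · rintro rfl
    exact Finset.mem_map.mpr ⟨j, Finset.mem_univ _, rfl⟩
  · intro hmem
    rcases Finset.mem_map.mp hmem with ⟨a, -, h⟩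
    have : l = l' := congrArg Sigma.fst h
    exact this.symm

lemma esymPoly_single (o : Fin m → ℕ) (l : Fin m) (k : ℕ) :
    esymPoly o {l} k =
      rename (fun j : Fin (o l) => (⟨l, j⟩ : Idx o)) (esymm (Fin (o l)) ℂ k) := by
  rw [esymPoly, esymm, alphF_single, Finset.powersetCard_map, Finset.sum_map, map_sum]
  refine Finset.sum_congr rfl fun t _ => ?_
  show ∏ v ∈ Finset.mapEmbedding (embIdx o l) t, X v = _
  rw [Finset.mapEmbedding_apply, Finset.prod_map, map_prod]
  simp [embIdx]
  rfl

variable (o : Fin 3 → ℕ)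

lemma T3_esymPoly0 (k : ℕ) : T3 o (esymPoly o {0} k) = esymm (Fin (o 0)) (B1' o) k := by
  simp only [esymPoly_single, esymm, map_sum, map_prod, rename_X, T3_X0]

lemma T3_esymPoly1 (k : ℕ) :
    T3 o (esymPoly o {1} k) = C (esymm (Fin (o 1)) (B2' o) k) := by
  simp only [esymPoly_single, esymm, map_sum, map_prod, rename_X, T3_X1]

lemma T3_esymPoly2 (k : ℕ) :
    T3 o (esymPoly o {2} k) = C (C (esymm (Fin (o 2)) ℂ k)) := by
  simp only [esymPoly_single, esymm, map_sum, map_prod, rename_X, T3_X2]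
def G3 (o : Fin 3 → ℕ) : MvPolynomial (Idx o) ℂ →ₐ[ℂ] MvPolynomial (Idx o) ℂ :=
  aeval fun v : Idx o => esymPoly o {v.1} ((v.2 : ℕ) + 1)

variable (o : Fin 3 → ℕ)

def k2' : B2' o →+* B2' o := keyHom (o 2) (RingHom.id ℂ)
def k1' : B1' o →+* B1' o := keyHom (o 1) (k2' o)
def k0' : P3' o →+* P3' o := keyHom (o 0) (k1' o)

lemma k2'_injective : Function.Injective (k2' o) :=
  keyHom_injective _ fun _ _ h => h

lemma k1'_injective : Function.Injective (k1' o) :=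
  keyHom_injective _ (k2'_injective o)

lemma k0'_injective : Function.Injective (k0' o) :=
  keyHom_injective _ (k1'_injective o)

lemma T3_comp_G3 (x : MvPolynomial (Idx o) ℂ) : T3 o (G3 o x) = k0' o (T3 o x) := by
  have : ((T3 o : MvPolynomial (Idx o) ℂ →+* P3' o).comp (G3 o : _ →+* _)) =
      (k0' o).comp (T3 o : MvPolynomial (Idx o) ℂ →+* P3' o) := by
    apply MvPolynomial.ringHom_ext
    · intro r
      simp only [RingHom.comp_apply, RingHom.coe_coe]
      rw [show (C r : MvPolynomial (Idx o) ℂ) = algebraMap ℂ _ r from rfl]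
      rw [AlgHom.commutes, AlgEquiv.commutes]
      have : algebraMap ℂ (P3' o) r = C (C (C r)) := rfl
      rw [this, k0', keyHom_C, k1', keyHom_C, k2', keyHom_C]
      rfl
    · rintro ⟨l, j⟩
      simp only [RingHom.comp_apply, RingHom.coe_coe, G3, aeval_X]
      fin_cases l
      · show (T3 o) (esymPoly o {0} ((j : ℕ) + 1)) = (k0' o) ((T3 o) (X ⟨0, j⟩))
        rw [T3_esymPoly0, T3_X0, k0', keyHom_X]
      · show (T3 o) (esymPoly o {1} ((j : ℕ) + 1)) = (k0' o) ((T3 o) (X ⟨1, j⟩))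
        rw [T3_esymPoly1, T3_X1, k0', keyHom_C, k1', keyHom_X]
      · show (T3 o) (esymPoly o {2} ((j : ℕ) + 1)) = (k0' o) ((T3 o) (X ⟨2, j⟩))
        rw [T3_esymPoly2, T3_X2, k0', keyHom_C, k1', keyHom_C, k2', keyHom_X]
  exact congrFun (congrArg (fun f => f.toFun) this) x
def M1' (g1 : Equiv.Perm (Fin (o 1))) (g2 : Equiv.Perm (Fin (o 2))) : B1' o →+* B1' o :=
  ((rename ⇑g1 : B1' o →ₐ[B2' o] B1' o) : B1' o →+* B1' o).comp
    (MvPolynomial.map (((rename ⇑g2 : B2' o →ₐ[ℂ] B2' o) : B2' o →+* B2' o)))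

lemma map_rename_one (x : B1' o) :
    MvPolynomial.map ((rename ⇑(1 : Equiv.Perm (Fin (o 2))) : B2' o →ₐ[ℂ] B2' o) :
      B2' o →+* B2' o) x = x := by
  apply MvPolynomial.ext
  intro m
  rw [coeff_map]
  simp [Equiv.Perm.coe_one, rename_id]

lemma M1'_apply (g1 : Equiv.Perm (Fin (o 1))) (g2 : Equiv.Perm (Fin (o 2))) (x : B1' o) :
    M1' o g1 g2 x = rename ⇑g1 (MvPolynomial.map
      ((rename ⇑g2 : B2' o →ₐ[ℂ] B2' o) : B2' o →+* B2' o) x) := rfl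

lemma M1'_one_one (x : B1' o) : M1' o 1 1 x = x := by
  rw [M1'_apply, map_rename_one]
  simp [Equiv.Perm.coe_one, rename_id]

lemma M1'_left (e : Equiv.Perm (Fin (o 1))) (x : B1' o) : M1' o e 1 x = rename ⇑e x := by
  rw [M1'_apply, map_rename_one]

lemma M1'_right (e : Equiv.Perm (Fin (o 2))) (x : B1' o) :
    M1' o 1 e x = MvPolynomial.map
      ((rename ⇑e : B2' o →ₐ[ℂ] B2' o) : B2' o →+* B2' o) x := by
  rw [M1'_apply]
  simp [Equiv.Perm.coe_one, rename_id]

lemma T3_rename (g : ∀ l, Equiv.Perm (Fin (o l))) (x : MvPolynomial (Idx o) ℂ) :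
    T3 o (rename ⇑(permIdx o g) x)
      = rename ⇑(g 0) (MvPolynomial.map (M1' o (g 1) (g 2)) (T3 o x)) := by
  have key : ((T3 o : MvPolynomial (Idx o) ℂ →+* P3' o).comp
        ((rename ⇑(permIdx o g) : _ →ₐ[ℂ] _) : MvPolynomial (Idx o) ℂ →+* _)) =
      (((rename ⇑(g 0) : P3' o →ₐ[B1' o] P3' o) : P3' o →+* P3' o).comp
        (MvPolynomial.map (M1' o (g 1) (g 2)))).comp
        (T3 o : MvPolynomial (Idx o) ℂ →+* P3' o) := by
    apply MvPolynomial.ringHom_ext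
    · intro r
      simp only [RingHom.comp_apply, RingHom.coe_coe, rename_C]
      have h1 : (T3 o) (C r) = C (C (C r)) := by
        rw [show (C r : MvPolynomial (Idx o) ℂ) = algebraMap ℂ _ r from rfl, AlgEquiv.commutes]
        rfl
      rw [h1, map_C, rename_C, M1'_apply]
      simp [rename_C]
    · rintro ⟨l, j⟩
      simp only [RingHom.comp_apply, RingHom.coe_coe, rename_X]
      have hperm : (permIdx o g) ⟨l, j⟩ = ⟨l, g l j⟩ := rfl
      rw [hperm]
      fin_cases l
      · show (T3 o) (X ⟨0, g 0 j⟩)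
          = rename ⇑(g 0) ((MvPolynomial.map (M1' o (g 1) (g 2))) ((T3 o) (X ⟨0, j⟩)))
        rw [T3_X0, T3_X0, map_X, rename_X]
      · show (T3 o) (X ⟨1, g 1 j⟩)
          = rename ⇑(g 0) ((MvPolynomial.map (M1' o (g 1) (g 2))) ((T3 o) (X ⟨1, j⟩)))
        rw [T3_X1, T3_X1, map_C, rename_C, M1'_apply]
        simp [rename_X]
      · show (T3 o) (X ⟨2, g 2 j⟩)
          = rename ⇑(g 0) ((MvPolynomial.map (M1' o (g 1) (g 2))) ((T3 o) (X ⟨2, j⟩)))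
        rw [T3_X2, T3_X2, map_C, rename_C, M1'_apply]
        simp [rename_X, rename_C]
  exact congrFun (congrArg (fun f => f.toFun) key) x

lemma mem_sep_iff3 (p : MvPolynomial (Idx o) ℂ) : p ∈ sep o ↔
    (T3 o p).IsSymmetric ∧ ∀ m, (coeff m (T3 o p)).IsSymmetric ∧
      ∀ m2, (coeff m2 (coeff m (T3 o p))).IsSymmetric := by
  rw [mem_sep]
  constructor
  · intro hp
    refine ⟨?_, fun m => ⟨?_, fun m2 => ?_⟩⟩
    · intro e
      have h := T3_rename o (Function.update 1 0 e) p
      rw [hp] at h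
      have h0 : Function.update (1 : ∀ l, Equiv.Perm (Fin (o l))) 0 e 0 = e :=
        Function.update_self _ _ _
      have h1 : Function.update (1 : ∀ l, Equiv.Perm (Fin (o l))) 0 e 1 = 1 :=
        Function.update_of_ne (by decide) _ _
      have h2 : Function.update (1 : ∀ l, Equiv.Perm (Fin (o l))) 0 e 2 = 1 :=
        Function.update_of_ne (by decide) _ _
      rw [h0, h1, h2] at h
      have hmap : MvPolynomial.map (M1' o (1 : Equiv.Perm (Fin (o 1)))
          (1 : Equiv.Perm (Fin (o 2)))) (T3 o p) = T3 o p := by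
        apply MvPolynomial.ext
        intro mm
        rw [coeff_map]
        exact M1'_one_one o _
      rw [hmap] at h
      exact h.symm
    · intro e
      have h := T3_rename o (Function.update 1 1 e) p
      rw [hp] at h
      have h0 : Function.update (1 : ∀ l, Equiv.Perm (Fin (o l))) 1 e 0 = 1 :=
        Function.update_of_ne (by decide) _ _
      have h1 : Function.update (1 : ∀ l, Equiv.Perm (Fin (o l))) 1 e 1 = e :=
        Function.update_self _ _ _
      have h2 : Function.update (1 : ∀ l, Equiv.Perm (Fin (o l))) 1 e 2 = 1 :=
        Function.update_of_ne (by decide) _ _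
      rw [h0, h1, h2, Equiv.Perm.coe_one, rename_id, AlgHom.id_apply] at h
      have hcoeff := congrArg (coeff m) h.symm
      rw [coeff_map] at hcoeff
      rw [show ((M1' o e 1) (coeff m (T3 o p))) = rename ⇑e (coeff m (T3 o p)) from
        M1'_left o e _] at hcoeff
      exact hcoeff
    · intro e
      have h := T3_rename o (Function.update 1 2 e) p
      rw [hp] at h
      have h0 : Function.update (1 : ∀ l, Equiv.Perm (Fin (o l))) 2 e 0 = 1 :=
        Function.update_of_ne (by decide) _ _
      have h1 : Function.update (1 : ∀ l, Equiv.Perm (Fin (o l))) 2 e 1 = 1 :=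
        Function.update_of_ne (by decide) _ _
      have h2 : Function.update (1 : ∀ l, Equiv.Perm (Fin (o l))) 2 e 2 = e :=
        Function.update_self _ _ _
      rw [h0, h1, h2, Equiv.Perm.coe_one, rename_id, AlgHom.id_apply] at h
      have hcoeff := congrArg (coeff m) h.symm
      rw [coeff_map] at hcoeff
      rw [show ((M1' o 1 e) (coeff m (T3 o p))) = _ from M1'_right o e _] at hcoeff
      have h3 := congrArg (coeff m2) hcoeff
      rw [coeff_map] at h3
      exact h3
  · rintro ⟨hsym, hcoeffs⟩ g
    apply (T3 o).injective
    rw [T3_rename]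
    have hmap : MvPolynomial.map (M1' o (g 1) (g 2)) (T3 o p) = T3 o p := by
      apply MvPolynomial.ext
      intro m
      rw [coeff_map]
      have hinner : MvPolynomial.map
          ((rename ⇑(g 2) : B2' o →ₐ[ℂ] B2' o) : B2' o →+* B2' o) (coeff m (T3 o p))
          = coeff m (T3 o p) := by
        apply MvPolynomial.ext
        intro m2
        rw [coeff_map]
        exact (hcoeffs m).2 m2 (g 2)
      show M1' o (g 1) (g 2) (coeff m (T3 o p)) = _
      rw [M1'_apply, hinner]
      exact (hcoeffs m).1 (g 1)
    rw [hmap]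
    exact hsym (g 0)
lemma mem_range_k0' (p : P3' o) : p ∈ Set.range (k0' o) ↔
    p.IsSymmetric ∧ ∀ m, (coeff m p).IsSymmetric ∧
      ∀ m2, (coeff m2 (coeff m p)).IsSymmetric := by
  rw [k0', keyHom_range _ (k1'_injective o)]
  refine and_congr Iff.rfl (forall_congr' fun m => ?_)
  rw [show k1' o = keyHom (o 1) (k2' o) from rfl, keyHom_range _ (k2'_injective o)]
  refine and_congr Iff.rfl (forall_congr' fun m2 => ?_)
  rw [show k2' o = keyHom (o 2) (RingHom.id ℂ) from rfl,
    keyHom_range _ (fun _ _ h => h)]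
  simp

lemma G3_injective : Function.Injective (G3 o) := by
  intro a b hab
  apply (T3 o).injective
  apply k0'_injective o
  rw [← T3_comp_G3, ← T3_comp_G3, hab]

lemma mem_sep_iff_range (p : MvPolynomial (Idx o) ℂ) :
    p ∈ sep o ↔ p ∈ Set.range (G3 o) := by
  rw [mem_sep_iff3, ← mem_range_k0']
  constructor
  · rintro ⟨y, hy⟩
    obtain ⟨x, rfl⟩ := (T3 o).surjective y
    exact ⟨x, (T3 o).injective (by rw [T3_comp_G3, hy])⟩
  · rintro ⟨x, rfl⟩
    exact ⟨T3 o x, (T3_comp_G3 o x).symm⟩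

lemma G3_mem_sep (x : MvPolynomial (Idx o) ℂ) : G3 o x ∈ sep o :=
  (mem_sep_iff_range o _).mpr ⟨x, rfl⟩

/-- The fundamental isomorphism: the polynomial ring on the blockwise elementary symmetric
generators maps isomorphically onto `sep o`. -/
def Φ3 : MvPolynomial (Idx o) ℂ ≃ₐ[ℂ] sep o :=
  AlgEquiv.ofBijective ((G3 o).codRestrict (sep o) (G3_mem_sep o))
    ⟨fun a b hab => G3_injective o (congrArg Subtype.val hab), by
      rintro ⟨p, hp⟩
      obtain ⟨x, hx⟩ := (mem_sep_iff_range o p).mp hp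
      exact ⟨x, Subtype.ext hx⟩⟩

lemma Φ3_apply_val (x : MvPolynomial (Idx o) ℂ) : (Φ3 o x : MvPolynomial (Idx o) ℂ) = G3 o x := rfl
lemma esymPoly_mem_supported {m : ℕ} (o' : Fin m → ℕ) (s : Finset (Fin m)) (k : ℕ) :
    esymPoly o' s k ∈ supported ℂ {v : Idx o' | v.1 ∈ s} := by
  rw [esymPoly]
  refine Subalgebra.sum_mem _ fun t ht => Subalgebra.prod_mem _ fun v hv => ?_
  rw [Finset.mem_powersetCard] at ht
  have := ht.1 hv
  rw [alphF, Finset.mem_filter] at this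
  exact X_mem_supported.mpr this.2

lemma fix_of_supported (F : MvPolynomial (Idx o) ℂ →ₐ[ℂ] MvPolynomial (Idx o) ℂ)
    (s : Set (Idx o)) (hF : ∀ v ∈ s, F (X v) = X v) {p : MvPolynomial (Idx o) ℂ}
    (hp : p ∈ supported ℂ s) : F p = p := by
  rw [supported] at hp
  induction hp using Algebra.adjoin_induction with
  | mem x hx =>
    rcases hx with ⟨v, hv, rfl⟩
    exact hF v hv
  | algebraMap r => exact F.commutes r
  | add x y hx hy ihx ihy => rw [map_add, ihx, ihy]
  | mul x y hx hy ihx ihy => rw [map_mul, ihx, ihy]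

def δ3 : MvPolynomial (Idx o) ℂ →ₐ[ℂ] MvPolynomial (Idx o) ℂ :=
  aeval fun v : Idx o => if v.1 = 0 then 0 else X v

lemma δ3_mem_supported (p : MvPolynomial (Idx o) ℂ) :
    δ3 o p ∈ supported ℂ {v : Idx o | v.1 ≠ 0} := by
  induction p using MvPolynomial.induction_on with
  | C r =>
    rw [show (C r : MvPolynomial (Idx o) ℂ) = algebraMap ℂ _ r from rfl, AlgHom.commutes]
    exact Subalgebra.algebraMap_mem _ r
  | add p q hp hq => rw [map_add]; exact Subalgebra.add_mem _ hp hq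
  | mul_X p v hp =>
    rw [map_mul]
    refine Subalgebra.mul_mem _ hp ?_
    rw [δ3, aeval_X]
    split_ifs with hv
    · exact Subalgebra.zero_mem _
    · exact X_mem_supported.mpr hv

lemma δ3_fix {p : MvPolynomial (Idx o) ℂ} (hp : p ∈ supported ℂ {v : Idx o | v.1 ≠ 0}) :
    δ3 o p = p := by
  refine fix_of_supported o _ _ (fun v hv => ?_) hp
  rw [δ3, aeval_X, if_neg hv]

lemma esymPoly0_vanish (k : ℕ) (hk : 1 ≤ k) : δ3 o (esymPoly o {0} k) = 0 := by
  rw [esymPoly, map_sum]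
  refine Finset.sum_eq_zero fun t ht => ?_
  rw [Finset.mem_powersetCard] at ht
  have hne : t.Nonempty := by
    rw [← Finset.card_pos, ht.2]; omega
  obtain ⟨v, hv⟩ := hne
  rw [map_prod]
  refine Finset.prod_eq_zero hv ?_
  have := ht.1 hv
  rw [alphF, Finset.mem_filter, Finset.mem_singleton] at this
  rw [δ3, aeval_X, if_pos this.2]

lemma δ3_G3 (x : MvPolynomial (Idx o) ℂ) : δ3 o (G3 o x) = G3 o (δ3 o x) := by
  have key : (δ3 o).comp (G3 o) = (G3 o).comp (δ3 o) := by
    apply MvPolynomial.algHom_ext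
    rintro ⟨l, j⟩
    simp only [AlgHom.comp_apply]
    rw [show (G3 o) (X ⟨l, j⟩) = esymPoly o {l} ((j : ℕ) + 1) from by rw [G3, aeval_X]]
    rw [show (δ3 o) (X ⟨l, j⟩) = if l = 0 then 0 else X ⟨l, j⟩ from by rw [δ3, aeval_X]]
    by_cases hl : l = 0
    · subst hl
      rw [if_pos rfl, map_zero, esymPoly0_vanish o _ (by omega)]
    · rw [if_neg hl]
      rw [show (G3 o) (X ⟨l, j⟩) = esymPoly o {l} ((j : ℕ) + 1) from by rw [G3, aeval_X]]
      refine δ3_fix o (supported_mono ?_ (esymPoly_mem_supported o {l} _))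
      intro v hv
      simp only [Set.mem_setOf_eq, Finset.mem_singleton] at hv ⊢
      rw [hv]; exact hl
  exact congrFun (congrArg (fun f => f.toFun) key) x

lemma T13_repr {f : MvPolynomial (Idx o) ℂ} (hf1 : f ∈ sep o)
    (hf2 : f ∈ supported ℂ {v : Idx o | v.1 ≠ 0}) :
    ∃ p, p ∈ supported ℂ {v : Idx o | v.1 ≠ 0} ∧ G3 o p = f := by
  obtain ⟨q, hq⟩ := (mem_sep_iff_range o f).mp hf1
  refine ⟨δ3 o q, δ3_mem_supported o q, ?_⟩
  rw [← δ3_G3, hq, δ3_fix o hf2]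

lemma esymPoly12_supported (k : ℕ) :
    esymPoly o {1, 2} k ∈ supported ℂ {v : Idx o | v.1 ≠ 0} := by
  refine supported_mono ?_ (esymPoly_mem_supported o {1, 2} k)
  intro v hv
  simp only [Set.mem_setOf_eq, Finset.mem_insert, Finset.mem_singleton] at hv ⊢
  rcases hv with h | h <;> rw [h] <;> decide

/-- A polynomial in the variables of `X_1 ⊔ X_2` representing `e_k(X_1 ⊔ X_2)` in terms of
the blockwise elementary symmetric generators. -/
def qsh (a : Fin (o 0)) : MvPolynomial (Idx o) ℂ :=
  Classical.choose (T13_repr o (esymPoly_mem o {1, 2} ((a : ℕ) + 1))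
    (esymPoly12_supported o ((a : ℕ) + 1)))

lemma qsh_supported (a : Fin (o 0)) : qsh o a ∈ supported ℂ {v : Idx o | v.1 ≠ 0} :=
  (Classical.choose_spec (T13_repr o (esymPoly_mem o {1, 2} ((a : ℕ) + 1))
    (esymPoly12_supported o ((a : ℕ) + 1)))).1

lemma G3_qsh (a : Fin (o 0)) : G3 o (qsh o a) = esymPoly o {1, 2} ((a : ℕ) + 1) :=
  (Classical.choose_spec (T13_repr o (esymPoly_mem o {1, 2} ((a : ℕ) + 1))
    (esymPoly12_supported o ((a : ℕ) + 1)))).2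

def shPlus : MvPolynomial (Idx o) ℂ →ₐ[ℂ] MvPolynomial (Idx o) ℂ :=
  aeval fun v : Idx o =>
    if h : v.1 = 0 then X v + qsh o (Fin.cast (congrArg o h) v.2) else X v

def shMinus : MvPolynomial (Idx o) ℂ →ₐ[ℂ] MvPolynomial (Idx o) ℂ :=
  aeval fun v : Idx o =>
    if h : v.1 = 0 then X v - qsh o (Fin.cast (congrArg o h) v.2) else X v

lemma shPlus_fix {p : MvPolynomial (Idx o) ℂ}
    (hp : p ∈ supported ℂ {v : Idx o | v.1 ≠ 0}) : shPlus o p = p :=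
  fix_of_supported o _ _ (fun v hv => by rw [shPlus, aeval_X, dif_neg hv]) hp

lemma shMinus_fix {p : MvPolynomial (Idx o) ℂ}
    (hp : p ∈ supported ℂ {v : Idx o | v.1 ≠ 0}) : shMinus o p = p :=
  fix_of_supported o _ _ (fun v hv => by rw [shMinus, aeval_X, dif_neg hv]) hp

lemma shMinus_comp_shPlus : (shMinus o).comp (shPlus o) = AlgHom.id ℂ _ := by
  apply MvPolynomial.algHom_ext
  rintro ⟨l, j⟩
  simp only [AlgHom.comp_apply, AlgHom.id_apply]
  rw [show (shPlus o) (X ⟨l, j⟩) = if h : l = 0 then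
      X ⟨l, j⟩ + qsh o (Fin.cast (congrArg o h) j) else X ⟨l, j⟩ from by rw [shPlus, aeval_X]]
  by_cases hl : l = 0
  · subst hl
    rw [dif_pos rfl, map_add, shMinus_fix o (qsh_supported o _)]
    rw [show (shMinus o) (X (⟨0, j⟩ : Idx o)) = X ⟨0, j⟩ - qsh o (Fin.cast rfl j) from by
      rw [shMinus, aeval_X, dif_pos rfl]]
    simp [Fin.cast_refl]
  · rw [dif_neg hl, shMinus, aeval_X, dif_neg hl]

lemma shPlus_comp_shMinus : (shPlus o).comp (shMinus o) = AlgHom.id ℂ _ := by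
  apply MvPolynomial.algHom_ext
  rintro ⟨l, j⟩
  simp only [AlgHom.comp_apply, AlgHom.id_apply]
  rw [show (shMinus o) (X ⟨l, j⟩) = if h : l = 0 then
      X ⟨l, j⟩ - qsh o (Fin.cast (congrArg o h) j) else X ⟨l, j⟩ from by rw [shMinus, aeval_X]]
  by_cases hl : l = 0
  · subst hl
    rw [dif_pos rfl, map_sub, shPlus_fix o (qsh_supported o _)]
    rw [show (shPlus o) (X (⟨0, j⟩ : Idx o)) = X ⟨0, j⟩ + qsh o (Fin.cast rfl j) from by
      rw [shPlus, aeval_X, dif_pos rfl]]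
    simp [Fin.cast_refl]
  · rw [dif_neg hl, shPlus, aeval_X, dif_neg hl]

/-- The shear automorphism `X₍₀,ₐ₎ ↦ X₍₀,ₐ₎ − q_a`. -/
def shEquiv : MvPolynomial (Idx o) ℂ ≃ₐ[ℂ] MvPolynomial (Idx o) ℂ :=
  AlgEquiv.ofAlgHom (shMinus o) (shPlus o) (shMinus_comp_shPlus o) (shPlus_comp_shMinus o)

/-- The composite isomorphism sending `X₍₀,ₐ₎` to the `a`-th member of the regular sequence. -/
def κ3 : MvPolynomial (Idx o) ℂ ≃ₐ[ℂ] sep o := (shEquiv o).trans (Φ3 o)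

lemma κ3_X0 (a : Fin (o 0)) :
    κ3 o (X ⟨0, a⟩) = Esub o {0} ((a : ℕ) + 1) - Esub o {1, 2} ((a : ℕ) + 1) := by
  apply Subtype.ext
  show (G3 o) ((shMinus o) (X ⟨0, a⟩)) = _
  rw [show (shMinus o) (X (⟨0, a⟩ : Idx o)) = X ⟨0, a⟩ - qsh o (Fin.cast rfl a) from by
    rw [shMinus, aeval_X, dif_pos rfl]]
  rw [map_sub, Fin.cast_refl, G3_qsh]
  congr 1
  rw [G3, aeval_X]
  rfl
section QuotX

lemma liftₐ_mk_aux {σ : Type} {B : Type} [CommRing B] [Algebra ℂ B]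
    (I : Ideal (MvPolynomial σ ℂ)) (f : MvPolynomial σ ℂ →ₐ[ℂ] B) (hI : ∀ a ∈ I, f a = 0)
    (x : MvPolynomial σ ℂ) : Ideal.Quotient.liftₐ I f hI (Ideal.Quotient.mk I x) = f x := rfl

/-- Quotient of a polynomial ring by the ideal generated by a set of variables. -/
def quotXEquiv (σ : Type) (s : Set σ) :
    (MvPolynomial σ ℂ ⧸ Ideal.span (MvPolynomial.X '' s : Set (MvPolynomial σ ℂ))) ≃ₐ[ℂ]
      MvPolynomial {v : σ // v ∉ s} ℂ := by
  classical
  refine AlgEquiv.ofAlgHom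
    (Ideal.Quotient.liftₐ _ (aeval fun v : σ => if h : v ∈ s then 0 else X ⟨v, h⟩) ?_)
    ((Ideal.Quotient.mkₐ ℂ _).comp (rename Subtype.val)) ?_ ?_
  · intro a ha
    refine Submodule.span_induction ?_ ?_ ?_ ?_ ha
    · intro x hx
      rw [Set.mem_image] at hx
      obtain ⟨v, hv, rfl⟩ := hx
      rw [aeval_X, dif_pos hv]
    · exact map_zero _
    · intro x y _ _ hx hy; rw [map_add, hx, hy, add_zero]
    · intro r x _ hx; rw [smul_eq_mul, map_mul, hx, mul_zero]
  · apply MvPolynomial.algHom_ext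
    rintro ⟨v, hv⟩
    simp only [AlgHom.comp_apply, AlgHom.id_apply, rename_X, Ideal.Quotient.mkₐ_eq_mk]
    rw [liftₐ_mk_aux, aeval_X, dif_neg hv]
  · apply Ideal.Quotient.algHom_ext
    apply MvPolynomial.algHom_ext
    intro v
    simp only [AlgHom.comp_apply, AlgHom.id_apply, Ideal.Quotient.mkₐ_eq_mk]
    rw [liftₐ_mk_aux, aeval_X]
    split_ifs with hv
    · rw [map_zero]
      exact (Ideal.Quotient.eq_zero_iff_mem.mpr (Ideal.subset_span (Set.mem_image_of_mem X hv))).symm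
    · rw [rename_X]

lemma quotXEquiv_mk_X (σ : Type) (s : Set σ) (v : σ) (hv : v ∉ s) :
    quotXEquiv σ s (Ideal.Quotient.mk _ (X v)) = X ⟨v, hv⟩ := by
  classical
  rw [quotXEquiv]
  simp only [AlgEquiv.ofAlgHom_apply]
  rw [liftₐ_mk_aux, aeval_X, dif_neg hv]

end QuotX

lemma mem_nonZeroDivisors_of_ringEquiv {A B : Type*} [CommRing A] [CommRing B] (e : A ≃+* B)
    {x : A} (hx : e x ∈ nonZeroDivisors B) : x ∈ nonZeroDivisors A := by
  rw [mem_nonZeroDivisors_iff_right] at hx ⊢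
  intro z hz
  have : e z * e x = 0 := by rw [← map_mul, hz, map_zero]
  have := hx (e z) this
  apply e.injective
  rw [this, map_zero]
lemma seq13_length : (seq13 o).length = o 0 := by simp [seq13]

lemma seq13_take_eq (t : ℕ) :
    {x | x ∈ (seq13 o).take t} =
      ⇑(κ3 o) '' (MvPolynomial.X '' {v : Idx o | v.1 = 0 ∧ (v.2 : ℕ) < t}) := by
  ext x
  simp only [Set.mem_setOf_eq, seq13, ← List.map_take, List.take_range, List.mem_map,
    List.mem_range, Set.mem_image]
  constructor
  · rintro ⟨a, ha, rfl⟩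
    have ha1 : a < t := lt_of_lt_of_le ha (min_le_left _ _)
    have ha2 : a < o 0 := lt_of_lt_of_le ha (min_le_right _ _)
    refine ⟨X ⟨0, ⟨a, ha2⟩⟩, ⟨⟨0, ⟨a, ha2⟩⟩, ⟨rfl, ha1⟩, rfl⟩, ?_⟩
    rw [κ3_X0]
  · rintro ⟨-, ⟨⟨l, j⟩, ⟨hl, hj⟩, rfl⟩, rfl⟩
    dsimp only at hl
    subst hl
    refine ⟨(j : ℕ), lt_min hj j.2, ?_⟩
    rw [κ3_X0]

lemma seq13_set_eq :
    {x | x ∈ seq13 o} = ⇑(κ3 o) '' (MvPolynomial.X '' {v : Idx o | v.1 = 0}) := by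
  ext x
  simp only [Set.mem_setOf_eq, seq13, List.mem_map, List.mem_range, Set.mem_image]
  constructor
  · rintro ⟨a, ha, rfl⟩
    exact ⟨X ⟨0, ⟨a, ha⟩⟩, ⟨⟨0, ⟨a, ha⟩⟩, rfl, rfl⟩, by rw [κ3_X0]⟩
  · rintro ⟨-, ⟨⟨l, j⟩, hl, rfl⟩, rfl⟩
    dsimp only at hl
    subst hl
    exact ⟨(j : ℕ), j.2, by rw [κ3_X0]⟩

lemma κ3_X_ne0 {l : Fin 3} (hl : l ≠ 0) (j : Fin (o l)) :
    κ3 o (X ⟨l, j⟩) = Esub o {l} ((j : ℕ) + 1) := by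
  apply Subtype.ext
  show (G3 o) ((shMinus o) (X ⟨l, j⟩)) = _
  rw [show (shMinus o) (X (⟨l, j⟩ : Idx o)) = X ⟨l, j⟩ from by rw [shMinus, aeval_X, dif_neg hl]]
  rw [show (G3 o) (X (⟨l, j⟩ : Idx o)) = esymPoly o {l} ((j : ℕ) + 1) from by rw [G3, aeval_X]]
  rfl

lemma Esub_mem_T13 {l : Fin 3} (hl : l ≠ 0) (k : ℕ) : Esub o {l} k ∈ T13 o := by
  show ((Esub o {l} k : sep o) : MvPolynomial (Idx o) ℂ) ∈ supported ℂ {v : Idx o | v.1 ≠ 0}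
  refine supported_mono ?_ (esymPoly_mem_supported o {l} k)
  intro v hv
  simp only [Set.mem_setOf_eq, Finset.mem_singleton] at hv ⊢
  rw [hv]; exact hl

/-- With `|X'| = |X_1| + |X_2|`: (i) the sequence
`e_a(X') − e_a(X_1 ⊔ X_2)`, `a = 1, …, |X'|`, is a regular sequence in `R` (each term is a
non-zero-divisor in the quotient by its predecessors); and (ii) writing `I` for the ideal it
generates, the composite of the inclusion of the subalgebra of `R` of polynomials in the
variables of `X_1 ⊔ X_2` only with the quotient map `R → R/I` is an isomorphism of
`ℂ`-algebras. -/
theorem statement13 (o : Fin 3 → ℕ) (h : o 0 = o 1 + o 2) :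
    (∀ (t : ℕ) (ht : t < (seq13 o).length),
        Ideal.Quotient.mk (Ideal.span {x | x ∈ (seq13 o).take t}) ((seq13 o).get ⟨t, ht⟩) ∈
          nonZeroDivisors ((sep o) ⧸ Ideal.span {x | x ∈ (seq13 o).take t})) ∧
      Function.Bijective
        ⇑((Ideal.Quotient.mkₐ ℂ (Ideal.span {x | x ∈ seq13 o})).comp (T13 o).val) := by
  constructor
  · -- part (i): regular sequence
    intro t ht
    have ht' : t < o 0 := by rwa [seq13_length] at ht
    set st : Set (Idx o) := {v : Idx o | v.1 = 0 ∧ (v.2 : ℕ) < t} with hst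
    set Jt : Ideal (MvPolynomial (Idx o) ℂ) := Ideal.span (MvPolynomial.X '' st) with hJt
    have hIdeal : Ideal.span {x | x ∈ (seq13 o).take t}
        = Ideal.map ((κ3 o).toRingEquiv : MvPolynomial (Idx o) ℂ →+* sep o) Jt := by
      rw [hJt, Ideal.map_span, seq13_take_eq]
      congr 1
    set e1 := Ideal.quotientEquiv Jt (Ideal.span {x | x ∈ (seq13 o).take t})
      (κ3 o).toRingEquiv hIdeal with he1
    set u : Idx o := ⟨0, ⟨t, ht'⟩⟩ with hu
    have hunot : u ∉ st := by
      intro hmem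
      exact absurd hmem.2 (by rw [hu]; simp)
    have hget : (seq13 o).get ⟨t, ht⟩ = κ3 o (X u) := by
      rw [κ3_X0]
      simp [seq13, hu]
    rw [hget]
    refine mem_nonZeroDivisors_of_ringEquiv (A := (sep o) ⧸ Ideal.span {x | x ∈ (seq13 o).take t})
      (e1.symm.trans (quotXEquiv (Idx o) st).toRingEquiv) (x := Ideal.Quotient.mk _ (κ3 o (X u))) ?_
    have hsymm : e1.symm (Ideal.Quotient.mk _ ((κ3 o) (X u)))
        = Ideal.Quotient.mk Jt (X u) := by
      rw [he1, Ideal.quotientEquiv_symm_mk]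
      congr 1
      exact (κ3 o).toRingEquiv.symm_apply_apply (X u)
    rw [RingEquiv.coe_trans, Function.comp_apply, hsymm]
    have hX : (quotXEquiv (Idx o) st).toRingEquiv (Ideal.Quotient.mk Jt (X u))
        = X (⟨u, hunot⟩ : {v : Idx o // v ∉ st}) := quotXEquiv_mk_X (Idx o) st u hunot
    rw [hX]
    exact mem_nonZeroDivisors_of_ne_zero (MvPolynomial.X_ne_zero _)
  · -- part (ii)
    set I := Ideal.span {x | x ∈ seq13 o} with hI
    set sful : Set (Idx o) := {v : Idx o | v.1 = 0} with hsful
    have hIdeal2 : I = Ideal.map ((κ3 o).toRingEquiv : MvPolynomial (Idx o) ℂ →+* sep o)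
        (Ideal.span (MvPolynomial.X '' sful)) := by
      rw [hI, Ideal.map_span, seq13_set_eq]
      congr 1
    set c := (Ideal.Quotient.mkₐ ℂ I).comp (T13 o).val with hc
    constructor
    · -- injectivity
      intro f1 f2 hf
      have hf' : Ideal.Quotient.mk I ((f1 : sep o)) = Ideal.Quotient.mk I ((f2 : sep o)) := hf
      set fd : sep o := (f1 : sep o) - (f2 : sep o) with hfdd
      have hmemI : fd ∈ I := Ideal.Quotient.eq.mp hf'
      have hs1 : ((f1 : sep o) : MvPolynomial (Idx o) ℂ)
          ∈ supported ℂ {v : Idx o | v.1 ≠ 0} := f1.2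
      have hs2 : ((f2 : sep o) : MvPolynomial (Idx o) ℂ)
          ∈ supported ℂ {v : Idx o | v.1 ≠ 0} := f2.2
      have hsupp : ((fd : sep o) : MvPolynomial (Idx o) ℂ)
          ∈ supported ℂ {v : Idx o | v.1 ≠ 0} := by
        rw [hfdd]
        exact sub_mem hs1 hs2
      obtain ⟨p, hp1, hp2⟩ := T13_repr o fd.2 hsupp
      have hκp : κ3 o p = fd := by
        apply Subtype.ext
        show (G3 o) ((shMinus o) p) = _
        rw [shMinus_fix o hp1, hp2]
      have hpJ : p ∈ Ideal.span (MvPolynomial.X '' sful) := by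
        have h1 : fd ∈ Ideal.map ((κ3 o).toRingEquiv : MvPolynomial (Idx o) ℂ →+* sep o)
            (Ideal.span (MvPolynomial.X '' sful)) := by rwa [← hIdeal2]
        have h2 := Ideal.mem_map_of_mem
          (((κ3 o).toRingEquiv.symm : sep o →+* MvPolynomial (Idx o) ℂ)) h1
        rw [Ideal.map_map] at h2
        have hcomp : ((↑(κ3 o).toRingEquiv.symm : ↥(sep o) →+* MvPolynomial (Idx o) ℂ).comp
            (↑(κ3 o).toRingEquiv : MvPolynomial (Idx o) ℂ →+* ↥(sep o))) = RingHom.id _ :=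
          RingHom.ext fun x => (κ3 o).toRingEquiv.symm_apply_apply x
        rw [hcomp, Ideal.map_id] at h2
        have h3 : (↑(κ3 o).toRingEquiv.symm : ↥(sep o) →+* MvPolynomial (Idx o) ℂ) fd = p := by
          show (κ3 o).toRingEquiv.symm fd = p
          rw [← hκp]
          exact (κ3 o).toRingEquiv.symm_apply_apply p
        rwa [h3] at h2
      have hp0 : p = 0 := by
        by_contra hp0
        obtain ⟨mm, hmm⟩ := MvPolynomial.support_nonempty.mpr hp0
        obtain ⟨i, hi, hmi⟩ := MvPolynomial.mem_ideal_span_X_image.mp hpJ mm hmm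
        have hvars : i ∈ p.vars := (MvPolynomial.mem_vars i).mpr
          ⟨mm, hmm, Finsupp.mem_support_iff.mpr hmi⟩
        have := (MvPolynomial.mem_supported.mp hp1) hvars
        exact this hi
      have hfd0 : fd = 0 := by
        rw [← hκp, hp0, map_zero]
      rw [hfdd] at hfd0
      have hval : (f1 : sep o) = (f2 : sep o) := sub_eq_zero.mp hfd0
      exact Subtype.ext hval
    · -- surjectivity
      intro y
      obtain ⟨z, rfl⟩ := Ideal.Quotient.mkₐ_surjective ℂ I y
      obtain ⟨x, rfl⟩ := (κ3 o).surjective z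
      set ca := (Ideal.Quotient.mkₐ ℂ I).comp (κ3 o).toAlgHom with hca
      have hx : ca x ∈ c.range := by
        have h2 : ca x ∈ Algebra.adjoin ℂ (Set.range (⇑ca ∘ MvPolynomial.X)) := by
          rw [Set.range_comp, ← AlgHom.map_adjoin, MvPolynomial.adjoin_range_X]
          exact ⟨x, trivial, rfl⟩
        refine Algebra.adjoin_le ?_ h2
        rintro - ⟨v, rfl⟩
        obtain ⟨l, j⟩ := v
        by_cases hl : l = 0
        · subst hl
          have : ca (X ⟨0, j⟩) = 0 := by
            show (Ideal.Quotient.mkₐ ℂ I) (κ3 o (X ⟨0, j⟩)) = 0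
            rw [κ3_X0, Ideal.Quotient.mkₐ_eq_mk, Ideal.Quotient.eq_zero_iff_mem]
            refine Ideal.subset_span ?_
            show _ ∈ {x | x ∈ seq13 o}
            simp only [Set.mem_setOf_eq, seq13, List.mem_map, List.mem_range]
            exact ⟨(j : ℕ), j.2, rfl⟩
          rw [Function.comp_apply, this]
          exact Subalgebra.zero_mem _
        · have : ca (X ⟨l, j⟩) = c ⟨Esub o {l} ((j : ℕ) + 1), Esub_mem_T13 o hl _⟩ := by
            show (Ideal.Quotient.mkₐ ℂ I) (κ3 o (X ⟨l, j⟩)) = _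
            rw [κ3_X_ne0 o hl]
            rfl
          rw [Function.comp_apply, this]
          exact ⟨_, rfl⟩
      obtain ⟨w, hw⟩ := hx
      exact ⟨w, hw⟩
end
end
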